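/- Supremum/infimum at limit points of the range: let F be a strategy-proof, individually rational mechanism on an interval of a rich single-crossing domain, and let F(R') be a limit point of Rn(F). Define R* = sup{R : F(R)=F(R')}. If there exists a sequence Rⁿ with F(R') < F(Rⁿ⁺¹) < F(Rⁿ) and F(Rⁿ)↓F(R'), then F(R*) = F(R'). Symmetrically, with R** = inf{R: F(R)=F(R')} and an increasing sequence of range bundles converging up to F(R'), F(R**) = F(R'). -/

import Mathlib

/-- Membership in the bundle space Z = [0,∞) × [0,1]. -/
def inZ (z : ℝ × ℝ) : Prop := 0 ≤ z.1 ∧ 0 ≤ z.2 ∧ z.2 ≤ 1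

/-- The paper's order on bundles: x ≤ z iff x = z or both coordinates strictly increase. -/
def bLe (x z : ℝ × ℝ) : Prop := x = z ∨ (x.1 < z.1 ∧ x.2 < z.2)

/-- Diagonal bundles: both coordinates strictly increase. -/
def bLt (x z : ℝ × ℝ) : Prop := x.1 < z.1 ∧ x.2 < z.2

/-- A classical preference on Z = [0,∞) × [0,1]: a complete transitive relation,
strictly decreasing in the payment t, strictly increasing in the share q, and
continuous (closed upper and lower contour sets within Z). -/
structure ClassicalPref where
  R : ℝ × ℝ → ℝ × ℝ → Prop
  total : ∀ x y, inZ x → inZ y → R x y ∨ R y x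
  transitive : ∀ x y z, R x y → R y z → R x z
  money_mono : ∀ t' t'' q : ℝ, 0 ≤ t' → t' < t'' → 0 ≤ q → q ≤ 1 →
    R (t', q) (t'', q) ∧ ¬ R (t'', q) (t', q)
  q_mono : ∀ t q' q'' : ℝ, 0 ≤ t → 0 ≤ q' → q' < q'' → q'' ≤ 1 →
    R (t, q'') (t, q') ∧ ¬ R (t, q') (t, q'')
  continuous : ∀ z, IsClosed {w | inZ w ∧ R w z} ∧ IsClosed {w | inZ w ∧ R z w}

/-- Strict preference. -/
def SPref (A : ClassicalPref) (x y : ℝ × ℝ) : Prop := A.R x y ∧ ¬ A.R y x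

/-- Indifference. -/
def Indiff (A : ClassicalPref) (x y : ℝ × ℝ) : Prop := A.R x y ∧ A.R y x

/-- Two classical preferences single-cross: indifference curves of the two
preferences meet in at most one bundle. -/
def SingleCrossing (A B : ClassicalPref) : Prop :=
  ∀ x y z, inZ x → inZ y → inZ z → Indiff A z x → Indiff B z y →
    ∀ w, inZ w → Indiff A w x → Indiff B w y → w = z

/-- Richness: any diagonal pair of bundles is indifferent under some member. -/
def RichDom (D : Set ClassicalPref) : Prop :=
  ∀ x y, inZ x → inZ y → bLt x y → ∃ A ∈ D, Indiff A x y

/-- A rich single-crossing domain. -/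
def RichSC (D : Set ClassicalPref) : Prop :=
  (∀ A ∈ D, ∀ B ∈ D, A ≠ B → SingleCrossing A B) ∧ RichDom D

/-- B cuts A from above: at every bundle z, the part of B's upper contour set
through z lying in the box below z is contained in that of A. -/
def CutsAbove (B A : ClassicalPref) : Prop :=
  ∀ z, inZ z → ∀ w, inZ w → bLe w z → B.R w z → A.R w z

/-- The order on a single-crossing domain: A ≺ B iff B cuts A from above. -/
def Prec (A B : ClassicalPref) : Prop := CutsAbove B A

/-- Weak version of the order. -/
def PrecSim (A B : ClassicalPref) : Prop := A = B ∨ Prec A B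

/-- Convergence of a sequence of preferences to R in the order topology on the
domain D: the sequence is eventually inside every open order interval around R. -/
def OrdConv (D : Set ClassicalPref) (seq : ℕ → ClassicalPref) (R : ClassicalPref) : Prop :=
  ∀ A ∈ D, ∀ B ∈ D, Prec A R → Prec R B →
    ∃ N, ∀ n ≥ N, Prec A (seq n) ∧ Prec (seq n) B

/-- A monotone (increasing or decreasing) sequence of preferences. -/
def MonoSeq (seq : ℕ → ClassicalPref) : Prop :=
  (∀ n, PrecSim (seq n) (seq (n + 1))) ∨ (∀ n, PrecSim (seq (n + 1)) (seq n))

-- Section 1: basics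
namespace SIL

open Set

lemma inZ_mk {t q : ℝ} (h1 : 0 ≤ t) (h2 : 0 ≤ q) (h3 : q ≤ 1) : inZ (t, q) := ⟨h1, h2, h3⟩

lemma rTotal (A : ClassicalPref) {x y} (hx : inZ x) (hy : inZ y) : A.R x y ∨ A.R y x :=
  A.total x y hx hy

lemma rRefl (A : ClassicalPref) {x} (hx : inZ x) : A.R x x :=
  (A.total x x hx hx).elim id id

lemma rOfNot (A : ClassicalPref) {x y} (hx : inZ x) (hy : inZ y) (h : ¬ A.R x y) : A.R y x :=
  (rTotal A hx hy).resolve_left h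

lemma rTrans (A : ClassicalPref) {x y z} (h1 : A.R x y) (h2 : A.R y z) : A.R x z :=
  A.transitive x y z h1 h2

/-- weak dominance: lower payment, higher share is weakly better -/
lemma dom_weak (A : ClassicalPref) {u v : ℝ × ℝ} (hu : inZ u) (hv : inZ v)
    (h1 : v.1 ≤ u.1) (h2 : u.2 ≤ v.2) : A.R v u := by
  obtain ⟨u1, u2⟩ := u
  obtain ⟨v1, v2⟩ := v
  simp only at h1 h2
  obtain ⟨hu1, hu2, hu3⟩ := hu
  obtain ⟨hv1, hv2, hv3⟩ := hv
  have step1 : A.R (v1, v2) (v1, u2) := by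
    rcases eq_or_lt_of_le h2 with h | h
    · subst h; exact rRefl A ⟨hv1, hu2, hu3⟩
    · exact (A.q_mono v1 u2 v2 hv1 hu2 h hv3).1
  have step2 : A.R (v1, u2) (u1, u2) := by
    rcases eq_or_lt_of_le h1 with h | h
    · subst h; exact rRefl A ⟨hv1, hu2, hu3⟩
    · exact (A.money_mono v1 u1 u2 hv1 h hu2 hu3).1
  exact rTrans A step1 step2

/-- strict dominance -/
lemma dom_strict (A : ClassicalPref) {u v : ℝ × ℝ} (hu : inZ u) (hv : inZ v)
    (h1 : v.1 ≤ u.1) (h2 : u.2 ≤ v.2) (hne : v.1 < u.1 ∨ u.2 < v.2) : ¬ A.R u v := by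
  intro h
  obtain ⟨u1, u2⟩ := u
  obtain ⟨v1, v2⟩ := v
  simp only at h1 h2 hne
  obtain ⟨hu1, hu2, hu3⟩ := hu
  obtain ⟨hv1, hv2, hv3⟩ := hv
  rcases hne with hlt | hlt
  · -- money strict via midpoint (v1, u2)
    have hm := (A.money_mono v1 u1 u2 hv1 hlt hu2 hu3).2
    have hq : A.R (v1, v2) (v1, u2) := by
      rcases eq_or_lt_of_le h2 with h' | h'
      · subst h'; exact rRefl A ⟨hv1, hu2, hu3⟩
      · exact (A.q_mono v1 u2 v2 hv1 hu2 h' hv3).1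
    exact hm (rTrans A h hq)
  · -- q strict via midpoint (v1, u2)? use (u1, v2)? chain: (u1,u2) ≽ (v1,v2) ≥ ...
    have hq := (A.q_mono u1 u2 v2 hu1 hu2 hlt hv3).2
    have hm : A.R (v1, v2) (u1, v2) := by
      rcases eq_or_lt_of_le h1 with h' | h'
      · subst h'; exact rRefl A ⟨hv1, hv2, hv3⟩
      · exact (A.money_mono v1 u1 v2 hv1 h' hv2 hv3).1
    have : A.R (u1, u2) (u1, v2) := rTrans A h hm
    exact hq this

/-- uniqueness of the indifference point in the t direction -/
lemma indiff_unique_t (A : ClassicalPref) {t t' q : ℝ} {c : ℝ × ℝ}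
    (hz : inZ (t, q)) (hz' : inZ (t', q))
    (h : Indiff A (t, q) c) (h' : Indiff A (t', q) c) : t = t' := by
  by_contra hne
  rcases lt_or_gt_of_ne hne with hlt | hlt
  · exact (A.money_mono t t' q hz.1 hlt hz.2.1 hz.2.2).2 (rTrans A h'.1 h.2)
  · exact (A.money_mono t' t q hz'.1 hlt hz.2.1 hz.2.2).2 (rTrans A h.1 h'.2)

/-- no shared indifference pair for distinct single-crossing preferences -/
lemma noDouble {A B : ClassicalPref} (hsc : SingleCrossing A B) {c d : ℝ × ℝ}
    (hc : inZ c) (hd : inZ d) (h1 : Indiff A c d) (h2 : Indiff B c d) : c = d := by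
  have := hsc d d c hd hd hc h1 h2 d hd ⟨rRefl A hd, rRefl A hd⟩ ⟨rRefl B hd, rRefl B hd⟩
  exact this.symm

end SIL
-- Section 2: IVT utilities
namespace SIL

open Set

lemma pref_ivt (A : ClassicalPref) {c : ℝ × ℝ} (hc : inZ c) (γ : ℝ → ℝ × ℝ) (hγ : Continuous γ)
    (hZ : ∀ s ∈ Icc (0:ℝ) 1, inZ (γ s)) (h0 : A.R (γ 0) c) (h1 : A.R c (γ 1)) :
    ∃ s ∈ Icc (0:ℝ) 1, Indiff A (γ s) c := by
  have h01 : (0:ℝ) ∈ Icc (0:ℝ) 1 := by constructor <;> norm_num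
  have h11 : (1:ℝ) ∈ Icc (0:ℝ) 1 := by constructor <;> norm_num
  have key := isPreconnected_closed_iff.1 isPreconnected_Icc
    (γ ⁻¹' {w | inZ w ∧ A.R w c}) (γ ⁻¹' {w | inZ w ∧ A.R c w})
    ((A.continuous c).1.preimage hγ) ((A.continuous c).2.preimage hγ)
    (fun s hs => by
      have hz := hZ s hs
      rcases rTotal A hz hc with h | h
      · exact Or.inl ⟨hz, h⟩
      · exact Or.inr ⟨hz, h⟩)
    ⟨0, h01, hZ 0 h01, h0⟩
    ⟨1, h11, hZ 1 h11, h1⟩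
  obtain ⟨s, hs, ⟨_, hA1⟩, ⟨_, hA2⟩⟩ := key
  exact ⟨s, hs, hA1, hA2⟩

/-- IVT in the payment direction.  Left endpoint weakly above `c`, right endpoint
weakly below, gives an indifference point in between. -/
lemma t_ivt (A : ClassicalPref) {c : ℝ × ℝ} (hc : inZ c) {t0 t1 q : ℝ}
    (h01 : t0 ≤ t1) (ht0 : 0 ≤ t0) (hq0 : 0 ≤ q) (hq1 : q ≤ 1)
    (hl : A.R (t0, q) c) (hr : A.R c (t1, q)) :
    ∃ t, t0 ≤ t ∧ t ≤ t1 ∧ Indiff A (t, q) c := by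
  have hγ : Continuous (fun s : ℝ => ((t0 + s * (t1 - t0), q) : ℝ × ℝ)) := by fun_prop
  have hZ : ∀ s ∈ Icc (0:ℝ) 1, inZ ((t0 + s * (t1 - t0), q) : ℝ × ℝ) := by
    intro s hs
    refine ⟨?_, hq0, hq1⟩
    simp only
    nlinarith [hs.1, hs.2]
  obtain ⟨s, hs, hind⟩ := pref_ivt A hc _ hγ hZ (by simpa using hl) (by
    have : t0 + 1 * (t1 - t0) = t1 := by ring
    simpa [this] using hr)
  refine ⟨t0 + s * (t1 - t0), by nlinarith [hs.1, hs.2], by nlinarith [hs.1, hs.2], hind⟩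

/-- IVT in the share direction. Lower endpoint weakly below `c`, upper endpoint
weakly above. -/
lemma q_ivt (A : ClassicalPref) {c : ℝ × ℝ} (hc : inZ c) {t q0 q1 : ℝ}
    (h01 : q0 ≤ q1) (ht : 0 ≤ t) (hq0 : 0 ≤ q0) (hq1 : q1 ≤ 1)
    (hl : A.R c (t, q0)) (hr : A.R (t, q1) c) :
    ∃ q, q0 ≤ q ∧ q ≤ q1 ∧ Indiff A (t, q) c := by
  have hγ : Continuous (fun s : ℝ => ((t, q1 + s * (q0 - q1)) : ℝ × ℝ)) := by fun_prop
  have hZ : ∀ s ∈ Icc (0:ℝ) 1, inZ ((t, q1 + s * (q0 - q1)) : ℝ × ℝ) := by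
    intro s hs
    refine ⟨ht, ?_, ?_⟩ <;> simp only <;> nlinarith [hs.1, hs.2]
  obtain ⟨s, hs, hind⟩ := pref_ivt A hc _ hγ hZ (by simpa using hr) (by
    have : q1 + 1 * (q0 - q1) = q0 := by ring
    simpa [this] using hl)
  refine ⟨q1 + s * (q0 - q1), by nlinarith [hs.1, hs.2], by nlinarith [hs.1, hs.2], hind⟩

/-- strict preference is stable under small perturbations of the first argument. -/
lemma strict_nbhd_fst (A : ClassicalPref) {v z : ℝ × ℝ} (hv : inZ v) (h : ¬ A.R v z) :
    ∃ ε > 0, ∀ w : ℝ × ℝ, inZ w → |w.1 - v.1| < ε → |w.2 - v.2| < ε → ¬ A.R w z := by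
  have hcl := (A.continuous z).1
  have hv' : v ∈ {w | inZ w ∧ A.R w z}ᶜ := fun hw => h hw.2
  obtain ⟨ε, hε, hball⟩ := Metric.isOpen_iff.1 hcl.isOpen_compl v hv'
  refine ⟨ε, hε, fun w hw h1 h2 hR => ?_⟩
  have : w ∈ Metric.ball v ε := by
    rw [Metric.mem_ball, Prod.dist_eq]
    simp only [Real.dist_eq]
    exact max_lt h1 h2
  exact (hball this) ⟨hw, hR⟩

/-- strict preference is stable under small perturbations of the second argument. -/
lemma strict_nbhd_snd (A : ClassicalPref) {v z : ℝ × ℝ} (hv : inZ v) (h : ¬ A.R z v) :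
    ∃ ε > 0, ∀ w : ℝ × ℝ, inZ w → |w.1 - v.1| < ε → |w.2 - v.2| < ε → ¬ A.R z w := by
  have hcl := (A.continuous z).2
  have hv' : v ∈ {w | inZ w ∧ A.R z w}ᶜ := fun hw => h hw.2
  obtain ⟨ε, hε, hball⟩ := Metric.isOpen_iff.1 hcl.isOpen_compl v hv'
  refine ⟨ε, hε, fun w hw h1 h2 hR => ?_⟩
  have : w ∈ Metric.ball v ε := by
    rw [Metric.mem_ball, Prod.dist_eq]
    simp only [Real.dist_eq]
    exact max_lt h1 h2
  exact (hball this) ⟨hw, hR⟩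

/-- limit lemma: if `z` is weakly preferred to all small rightward (in `t`)
perturbations of `v`, it is weakly preferred to `v`. -/
lemma limit_t (A : ClassicalPref) {z v : ℝ × ℝ} {ε : ℝ} (hε : 0 < ε)
    (h : ∀ r : ℝ, 0 < r → r ≤ ε → A.R z (v.1 + r, v.2)) (hZ : ∀ r : ℝ, 0 < r → r ≤ ε → inZ (v.1 + r, v.2)) :
    A.R z v := by
  have hcl := (A.continuous z).2
  have htend : Filter.Tendsto (fun k : ℕ => ((v.1 + ε / (k + 1), v.2) : ℝ × ℝ))
      Filter.atTop (nhds v) := by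
    have h1 : Filter.Tendsto (fun k : ℕ => v.1 + ε / (k + 1)) Filter.atTop (nhds (v.1 + 0)) := by
      apply Filter.Tendsto.add tendsto_const_nhds
      have : Filter.Tendsto (fun n : ℕ => 1 / ((n : ℝ) + 1)) Filter.atTop (nhds 0) := tendsto_one_div_add_atTop_nhds_zero_nat
      have h2 : Filter.Tendsto (fun k : ℕ => ε * (1 / (k + 1))) Filter.atTop (nhds (ε * 0)) :=
        Filter.Tendsto.const_mul ε this
      simpa [div_eq_mul_inv, one_div] using h2
    rw [add_zero] at h1
    have h3 : Filter.Tendsto (fun _ : ℕ => v.2) Filter.atTop (nhds v.2) := tendsto_const_nhds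
    have := h1.prodMk_nhds h3
    simpa using this
  have hmem : ∀ k : ℕ, ((v.1 + ε / (k + 1), v.2) : ℝ × ℝ) ∈ {w | inZ w ∧ A.R z w} := by
    intro k
    have hk : (0:ℝ) < (k:ℝ) + 1 := by positivity
    have hr1 : 0 < ε / ((k:ℝ) + 1) := by positivity
    have hr2 : ε / ((k:ℝ) + 1) ≤ ε := by
      rw [div_le_iff₀ hk]; nlinarith
    exact ⟨hZ _ hr1 hr2, h _ hr1 hr2⟩
  have := hcl.mem_of_tendsto htend (Filter.Eventually.of_forall hmem)
  exact this.2

end SIL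
-- Section 3: connectedness splitting and the extension lemma
namespace SIL

open Set

lemma no_split {P Q : ℝ → Prop} {lo hi : ℝ} (hle : lo ≤ hi)
    (cover : ∀ θ ∈ Icc lo hi, P θ ∨ Q θ)
    (disj : ∀ θ ∈ Icc lo hi, P θ → Q θ → False)
    (hP : ∀ θ₀ ∈ Icc lo hi, P θ₀ → ∃ ε > 0, ∀ θ ∈ Icc lo hi, |θ - θ₀| < ε → P θ)
    (hQ : ∀ θ₀ ∈ Icc lo hi, Q θ₀ → ∃ ε > 0, ∀ θ ∈ Icc lo hi, |θ - θ₀| < ε → Q θ)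
    (h0 : P lo) (h1 : Q hi) : False := by
  have mem_of_clP : ∀ θ ∈ Icc lo hi, θ ∈ closure {θ' | θ' ∈ Icc lo hi ∧ P θ'} → P θ := by
    intro θ hθ hcl
    rcases cover θ hθ with h | h
    · exact h
    · obtain ⟨ε, hε, himp⟩ := hQ θ hθ h
      obtain ⟨ν, ⟨hν1, hν2⟩, hd⟩ := Metric.mem_closure_iff.1 hcl ε hε
      rw [Real.dist_eq] at hd
      exact absurd h (fun _ => disj ν hν1 hν2 (himp ν hν1 (by rw [abs_sub_comm]; exact hd)))
  have mem_of_clQ : ∀ θ ∈ Icc lo hi, θ ∈ closure {θ' | θ' ∈ Icc lo hi ∧ Q θ'} → Q θ := by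
    intro θ hθ hcl
    rcases cover θ hθ with h | h
    · obtain ⟨ε, hε, himp⟩ := hP θ hθ h
      obtain ⟨ν, ⟨hν1, hν2⟩, hd⟩ := Metric.mem_closure_iff.1 hcl ε hε
      rw [Real.dist_eq] at hd
      exact absurd h (fun _ => disj ν hν1 (himp ν hν1 (by rw [abs_sub_comm]; exact hd)) hν2)
    · exact h
  have key := isPreconnected_closed_iff.1 isPreconnected_Icc
    (closure {θ' | θ' ∈ Icc lo hi ∧ P θ'}) (closure {θ' | θ' ∈ Icc lo hi ∧ Q θ'})
    isClosed_closure isClosed_closure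
    (fun θ hθ => by
      rcases cover θ hθ with h | h
      · exact Or.inl (subset_closure ⟨hθ, h⟩)
      · exact Or.inr (subset_closure ⟨hθ, h⟩))
    ⟨lo, ⟨le_refl lo, hle⟩, subset_closure ⟨⟨le_refl lo, hle⟩, h0⟩⟩
    ⟨hi, ⟨hle, le_refl hi⟩, subset_closure ⟨⟨hle, le_refl hi⟩, h1⟩⟩
  obtain ⟨θ, hθ, hc1, hc2⟩ := key
  exact disj θ hθ (mem_of_clP θ hθ hc1) (mem_of_clQ θ hθ hc2)

/-- extension lemma: every interior point has an indifference point strictly below it,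
with both coordinates positive and the payment coordinate arbitrarily close. -/
lemma exists_below (A : ClassicalPref) {c : ℝ × ℝ} (hc : inZ c) (hc1 : 0 < c.1) (hc2 : 0 < c.2) :
    ∃ a : ℝ × ℝ, inZ a ∧ Indiff A a c ∧ 0 < a.1 ∧ a.1 < c.1 ∧ 0 < a.2 ∧ a.2 < c.2 := by
  obtain ⟨c1, c2⟩ := c
  simp only at hc1 hc2
  obtain ⟨_, hq0, hq1⟩ := hc
  set η : ℝ := c1 / 2 with hηdef
  have hη : 0 < η := by positivity
  have hηlt : c1 - η < c1 := by simp [hηdef]; positivity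
  have hlt : c1 - η < c1 := hηlt
  have hpos : 0 < c1 - η := by simp [hηdef]; linarith
  -- (c1 - η, c2) is strictly better than c
  have hmono := A.money_mono (c1 - η) c1 c2 (le_of_lt hpos) hlt hq0 hq1
  have hnbhd := strict_nbhd_snd A (v := (c1 - η, c2)) (z := (c1, c2))
    ⟨le_of_lt hpos, hq0, hq1⟩ hmono.2
  obtain ⟨ε, hε, hball⟩ := hnbhd
  set δ : ℝ := min (ε / 2) (c2 / 2) with hδdef
  have hδ : 0 < δ := by apply lt_min <;> positivity
  have hδc2 : δ < c2 := by
    have : δ ≤ c2 / 2 := min_le_right _ _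
    linarith
  have hq0' : 0 ≤ c2 - δ := by linarith
  -- left endpoint strictly better than c
  have hZl : inZ ((c1 - η, c2 - δ) : ℝ × ℝ) := ⟨le_of_lt hpos, hq0', by simp only; linarith⟩
  have hZc : inZ ((c1, c2) : ℝ × ℝ) := ⟨by simp only; linarith, hq0, hq1⟩
  have hleft : ¬ A.R (c1, c2) (c1 - η, c2 - δ) := by
    apply hball _ hZl
    · simp only [sub_self, abs_zero]; exact hε
    · simp only
      rw [show c2 - δ - c2 = -δ by ring, abs_neg, abs_of_pos hδ]
      have : δ ≤ ε / 2 := min_le_left _ _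
      linarith
  have hleft' : A.R (c1 - η, c2 - δ) (c1, c2) := rOfNot A hZc hZl hleft
  -- right endpoint strictly worse than c
  have hqm := A.q_mono c1 (c2 - δ) c2 (by linarith) hq0' (by linarith) hq1
  -- IVT
  obtain ⟨t, ht0, ht1, hind⟩ := t_ivt A (c := (c1, c2)) hZc
    (t0 := c1 - η) (t1 := c1) (q := c2 - δ) (le_of_lt hlt) (le_of_lt hpos) hq0'
    (by linarith) hleft' hqm.1
  have htne : t ≠ c1 := by
    intro h
    subst h
    exact hqm.2 hind.1
  refine ⟨(t, c2 - δ), ⟨by simp only; linarith, hq0', by simp only; linarith⟩, hind,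
    by simp only; linarith, by simp only; exact lt_of_le_of_ne ht1 htne,
    by simp only; linarith, by simp only; linarith⟩

end SIL
-- Section 4: sign constancy along an indifference curve below a point
namespace SIL

open Set

/-- relative openness (in the share coordinate) of carrying an indifference
point with a stable property `S`. -/
lemma sign_open (A : ClassicalPref) {c : ℝ × ℝ} (hc : inZ c) (S : ℝ × ℝ → Prop)
    (hS : ∀ v : ℝ × ℝ, inZ v → S v →
      ∃ ε > 0, ∀ w : ℝ × ℝ, inZ w → |w.1 - v.1| < ε → |w.2 - v.2| < ε → S w)
    {lo hi : ℝ} (hlo0 : 0 ≤ lo) (hhi1 : hi ≤ 1)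
    {pl : ℝ × ℝ} (hplZ : inZ pl) (hplI : Indiff A pl c) (hpl2 : pl.2 = lo) :
    ∀ θ₀ ∈ Icc lo hi, (∃ t, 0 ≤ t ∧ inZ ((t, θ₀) : ℝ × ℝ) ∧ Indiff A (t, θ₀) c ∧ S (t, θ₀)) →
    ∃ ε > 0, ∀ θ ∈ Icc lo hi, |θ - θ₀| < ε →
      (∃ t, 0 ≤ t ∧ inZ ((t, θ) : ℝ × ℝ) ∧ Indiff A (t, θ) c ∧ S (t, θ)) := by
  rintro θ₀ hθ₀ ⟨th, hth0, hthZ, hind, hsgn⟩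
  have hθ01 : 0 ≤ θ₀ := le_trans hlo0 hθ₀.1
  have hθ02 : θ₀ ≤ 1 := le_trans hθ₀.2 hhi1
  obtain ⟨ε1, hε1, hball1⟩ := hS _ hthZ hsgn
  rcases eq_or_lt_of_le hth0 with h0 | h0
  · -- th = 0 : the witness sits on the t = 0 boundary, θ₀ must be lo
    have hθlo : θ₀ = lo := by
      by_contra hne
      have hgt : lo < θ₀ := lt_of_le_of_ne hθ₀.1 (Ne.symm hne)
      have hAc : A.R pl (0, θ₀) := rTrans A hplI.1 (h0 ▸ hind.2)
      have := dom_strict A (u := pl) (v := ((0, θ₀) : ℝ × ℝ)) hplZ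
        (inZ_mk (le_refl 0) hθ01 hθ02) hplZ.1 (by rw [hpl2]; exact le_of_lt hgt)
        (Or.inr (by rw [hpl2]; exact hgt))
      exact this hAc
    -- right sandwich point
    set η : ℝ := ε1 / 2 with hηdef
    have hη : 0 < η := by positivity
    have hvZ : inZ ((η, θ₀) : ℝ × ℝ) := inZ_mk (le_of_lt hη) hθ01 hθ02
    have hmono := A.money_mono 0 η θ₀ (le_refl 0) hη hθ01 hθ02
    have hvp : ¬ A.R (η, θ₀) c := fun h =>
      hmono.2 (rTrans A h (h0 ▸ hind.2))
    obtain ⟨ε3, hε3, hball3⟩ := strict_nbhd_fst A hvZ hvp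
    refine ⟨min ε3 (min ε1 1), by positivity, ?_⟩
    intro θ hθ hθd
    have hθ1 : 0 ≤ θ := le_trans hlo0 hθ.1
    have hθ2 : θ ≤ 1 := le_trans hθ.2 hhi1
    have hθge : θ₀ ≤ θ := hθlo ▸ hθ.1
    -- left endpoint of IVT
    have hleft : A.R (0, θ) c := by
      have hd : A.R ((0, θ) : ℝ × ℝ) ((0, θ₀) : ℝ × ℝ) :=
        dom_weak A ⟨le_refl 0, hθ01, hθ02⟩ ⟨le_refl 0, hθ1, hθ2⟩ (le_refl 0) hθge
      exact rTrans A hd (h0 ▸ hind.1)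
    -- right endpoint
    have hηθZ : inZ ((η, θ) : ℝ × ℝ) := inZ_mk (le_of_lt hη) hθ1 hθ2
    have hcon : ¬ A.R (η, θ) c := by
      apply hball3 (η, θ) hηθZ (by simpa using hε3)
      simp only
      exact lt_of_lt_of_le hθd (min_le_left _ _)
    have hright : A.R c (η, θ) := rOfNot A hηθZ hc hcon
    obtain ⟨t, ht0, ht1, htI⟩ := t_ivt A hc (t0 := 0) (t1 := η) (q := θ)
      (le_of_lt hη) (le_refl 0) hθ1 hθ2 hleft hright
    refine ⟨t, ht0, inZ_mk ht0 hθ1 hθ2, htI, ?_⟩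
    apply hball1 (t, θ) (inZ_mk ht0 hθ1 hθ2)
    · simp only
      rw [← h0, sub_zero, abs_of_nonneg ht0]
      calc t ≤ η := ht1
        _ < ε1 := by rw [hηdef]; linarith
    · simp only
      exact lt_of_lt_of_le hθd (le_trans (min_le_right _ _) (min_le_left _ _))
  · -- 0 < th : interior witness
    set η : ℝ := min (ε1 / 2) (th / 2) with hηdef
    have hη : 0 < η := by apply lt_min <;> positivity
    have hηth : η < th := by
      calc η ≤ th / 2 := min_le_right _ _
        _ < th := by linarith
    have hηε1 : η < ε1 := by
      calc η ≤ ε1 / 2 := min_le_left _ _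
        _ < ε1 := by linarith
    have hvmZ : inZ ((th - η, θ₀) : ℝ × ℝ) := inZ_mk (by linarith) hθ01 hθ02
    have hvpZ : inZ ((th + η, θ₀) : ℝ × ℝ) := inZ_mk (by linarith) hθ01 hθ02
    have hmm := A.money_mono (th - η) th θ₀ (by linarith) (by linarith) hθ01 hθ02
    have hmp := A.money_mono th (th + η) θ₀ (by linarith) (by linarith) hθ01 hθ02
    -- v- strictly better than c, v+ strictly worse
    have hvm : ¬ A.R c (th - η, θ₀) := fun h => hmm.2 (rTrans A hind.1 h)
    have hvp : ¬ A.R (th + η, θ₀) c := fun h => hmp.2 (rTrans A h hind.2)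
    obtain ⟨ε2, hε2, hball2⟩ := strict_nbhd_snd A hvmZ hvm
    obtain ⟨ε3, hε3, hball3⟩ := strict_nbhd_fst A hvpZ hvp
    refine ⟨min ε2 (min ε3 ε1), by positivity, ?_⟩
    intro θ hθ hθd
    have hθ1 : 0 ≤ θ := le_trans hlo0 hθ.1
    have hθ2 : θ ≤ 1 := le_trans hθ.2 hhi1
    have hmZ : inZ ((th - η, θ) : ℝ × ℝ) := inZ_mk (by linarith) hθ1 hθ2
    have hpZ : inZ ((th + η, θ) : ℝ × ℝ) := inZ_mk (by linarith) hθ1 hθ2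
    have hconl : ¬ A.R c (th - η, θ) := by
      apply hball2 (th - η, θ) hmZ (by simpa using hε2)
      simp only
      exact lt_of_lt_of_le hθd (min_le_left _ _)
    have hleft : A.R (th - η, θ) c := rOfNot A hc hmZ hconl
    have hconr : ¬ A.R (th + η, θ) c := by
      apply hball3 (th + η, θ) hpZ (by simpa using hε3)
      simp only
      exact lt_of_lt_of_le hθd (le_trans (min_le_right _ _) (min_le_left _ _))
    have hright : A.R c (th + η, θ) := rOfNot A hpZ hc hconr
    obtain ⟨t, ht0, ht1, htI⟩ := t_ivt A hc (t0 := th - η) (t1 := th + η) (q := θ)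
      (by linarith) (by linarith) hθ1 hθ2 hleft hright
    refine ⟨t, by linarith, inZ_mk (by linarith) hθ1 hθ2, htI, ?_⟩
    apply hball1 (t, θ) (inZ_mk (by linarith) hθ1 hθ2)
    · simp only
      rw [abs_sub_lt_iff]
      constructor <;> linarith
    · simp only
      exact lt_of_lt_of_le hθd (le_trans (min_le_right _ _) (min_le_right _ _))

end SIL
namespace SIL

open Set

lemma sign_aux (A : ClassicalPref) {c : ℝ × ℝ} (hc : inZ c)
    (S1 S2 : ℝ × ℝ → Prop)
    (hS1 : ∀ v : ℝ × ℝ, inZ v → S1 v →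
      ∃ ε > 0, ∀ w : ℝ × ℝ, inZ w → |w.1 - v.1| < ε → |w.2 - v.2| < ε → S1 w)
    (hS2 : ∀ v : ℝ × ℝ, inZ v → S2 v →
      ∃ ε > 0, ∀ w : ℝ × ℝ, inZ w → |w.1 - v.1| < ε → |w.2 - v.2| < ε → S2 w)
    (hdisj : ∀ v : ℝ × ℝ, inZ v → S1 v → S2 v → False)
    (hdich : ∀ v : ℝ × ℝ, inZ v → Indiff A v c → v.1 < c.1 → S1 v ∨ S2 v)
    {pl ph : ℝ × ℝ} (hplZ : inZ pl) (hphZ : inZ ph)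
    (hplI : Indiff A pl c) (hphI : Indiff A ph c)
    (hpl : bLt pl c) (hph : bLt ph c)
    (hq : pl.2 < ph.2) (h1 : S1 pl) (h2 : S2 ph) : False := by
  have hplph : pl.1 < ph.1 := by
    by_contra hcon
    push_neg at hcon
    exact dom_strict A (u := pl) (v := ph) hplZ hphZ hcon (le_of_lt hq) (Or.inr hq)
      (rTrans A hplI.1 hphI.2)
  apply no_split (le_of_lt hq)
    (P := fun θ => ∃ t, 0 ≤ t ∧ inZ ((t, θ) : ℝ × ℝ) ∧ Indiff A (t, θ) c ∧ S1 (t, θ))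
    (Q := fun θ => ∃ t, 0 ≤ t ∧ inZ ((t, θ) : ℝ × ℝ) ∧ Indiff A (t, θ) c ∧ S2 (t, θ))
  · -- cover
    intro θ hθ
    have hθ1 : 0 ≤ θ := le_trans hplZ.2.1 hθ.1
    have hθ2 : θ ≤ 1 := le_trans hθ.2 hphZ.2.2
    have hleft : A.R (pl.1, θ) c := by
      have : A.R ((pl.1, θ) : ℝ × ℝ) pl :=
        dom_weak A hplZ (inZ_mk hplZ.1 hθ1 hθ2) (le_refl _) hθ.1
      exact rTrans A this hplI.1
    have hright : A.R c (ph.1, θ) := by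
      have : A.R ph ((ph.1, θ) : ℝ × ℝ) :=
        dom_weak A (inZ_mk hphZ.1 hθ1 hθ2) hphZ (le_refl _) hθ.2
      exact rTrans A hphI.2 this
    obtain ⟨t, ht0, ht1, htI⟩ := t_ivt A hc (le_of_lt hplph) hplZ.1 hθ1 hθ2 hleft hright
    have htZ : inZ ((t, θ) : ℝ × ℝ) := inZ_mk (le_trans hplZ.1 ht0) hθ1 hθ2
    rcases hdich (t, θ) htZ htI (by simp only; exact lt_of_le_of_lt ht1 hph.1) with h | h
    · exact Or.inl ⟨t, le_trans hplZ.1 ht0, htZ, htI, h⟩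
    · exact Or.inr ⟨t, le_trans hplZ.1 ht0, htZ, htI, h⟩
  · -- disjoint
    rintro θ hθ ⟨t1, ht10, ht1Z, ht1I, hs1⟩ ⟨t2, ht20, ht2Z, ht2I, hs2⟩
    have := indiff_unique_t A ht1Z ht2Z ht1I ht2I
    subst this
    exact hdisj _ ht1Z hs1 hs2
  · exact sign_open A hc S1 hS1 hplZ.2.1 hphZ.2.2 hplZ hplI rfl
  · exact sign_open A hc S2 hS2 hplZ.2.1 hphZ.2.2 hplZ hplI rfl
  · exact ⟨pl.1, hplZ.1, by rw [Prod.mk.eta]; exact hplZ, by rw [Prod.mk.eta]; exact hplI,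
      by rw [Prod.mk.eta]; exact h1⟩
  · exact ⟨ph.1, hphZ.1, by rw [Prod.mk.eta]; exact hphZ, by rw [Prod.mk.eta]; exact hphI,
      by rw [Prod.mk.eta]; exact h2⟩

/-- opposite strict `B`-signs at two points of the same `A`-indifference curve
below `c` are impossible. -/
lemma sign_const {A B : ClassicalPref} (hsc : SingleCrossing A B) {c a a' : ℝ × ℝ}
    (hc : inZ c) (ha : inZ a) (ha' : inZ a')
    (haI : Indiff A a c) (ha'I : Indiff A a' c)
    (hab : bLt a c) (hab' : bLt a' c)
    (hsgn : ¬ B.R a c) (hsgn' : ¬ B.R c a') : False := by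
  have hS1 := fun (v : ℝ × ℝ) (hv : inZ v) (h : ¬ B.R v c) => strict_nbhd_fst B hv h
  have hS2 := fun (v : ℝ × ℝ) (hv : inZ v) (h : ¬ B.R c v) => strict_nbhd_snd B hv h
  have hdisj : ∀ v : ℝ × ℝ, inZ v → ¬ B.R v c → ¬ B.R c v → False := by
    intro v hv h1 h2
    rcases rTotal B hv hc with h | h
    exacts [h1 h, h2 h]
  have hdich : ∀ v : ℝ × ℝ, inZ v → Indiff A v c → v.1 < c.1 → (¬ B.R v c) ∨ (¬ B.R c v) := by
    intro v hv hI hlt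
    by_contra hcon
    push_neg at hcon
    have := noDouble hsc hv hc hI ⟨hcon.1, hcon.2⟩
    rw [this] at hlt
    exact lt_irrefl _ hlt
  rcases lt_trichotomy a.2 a'.2 with h | h | h
  · exact sign_aux A hc _ _ hS1 hS2 hdisj hdich ha ha' haI ha'I hab hab' h hsgn hsgn'
  · -- same share: same point
    have h1 : Indiff A (a.1, a.2) c := by rw [Prod.mk.eta]; exact haI
    have h2 : Indiff A (a'.1, a.2) c := by rw [h, Prod.mk.eta]; exact ha'I
    have := indiff_unique_t A (by rw [Prod.mk.eta]; exact ha) (by rw [h, Prod.mk.eta]; exact ha')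
      h1 h2
    have heq : a = a' := Prod.ext this h
    rw [heq] at hsgn
    exact hdisj a' ha' hsgn hsgn'
  · exact sign_aux A hc _ _ hS2 hS1 (fun v hv hx hy => hdisj v hv hy hx)
      (fun v hv hI hlt => (hdich v hv hI hlt).symm) ha' ha ha'I haI hab' hab h hsgn' hsgn

end SIL
namespace SIL

open Set

lemma mopen_pos {A B : ClassicalPref} {cp : ℝ → ℝ × ℝ} (hcont : Continuous cp)
    (hcZ : ∀ μ ∈ Icc (0:ℝ) 1, inZ (cp μ)) :
    ∀ μ₀ ∈ Icc (0:ℝ) 1,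
      (∃ a : ℝ × ℝ, inZ a ∧ 0 < a.1 ∧ a.1 < (cp μ₀).1 ∧ a.2 < (cp μ₀).2 ∧
        Indiff A a (cp μ₀) ∧ ¬ B.R a (cp μ₀)) →
      ∃ ε > 0, ∀ μ ∈ Icc (0:ℝ) 1, |μ - μ₀| < ε →
        (∃ a : ℝ × ℝ, inZ a ∧ bLt a (cp μ) ∧ Indiff A a (cp μ) ∧ ¬ B.R a (cp μ)) := by
  rintro μ₀ hμ₀ ⟨a, haZ, ha1, hac1, hac2, haI, hsgn⟩
  obtain ⟨ε1, hε1, hball1⟩ := strict_nbhd_fst B haZ hsgn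
  set η : ℝ := min (ε1 / 2) (min (a.1 / 2) (((cp μ₀).1 - a.1) / 2)) with hηdef
  have hη : 0 < η := by
    apply lt_min (by positivity)
    apply lt_min <;> [positivity; (apply div_pos (by linarith) (by norm_num))]
  have hηa : η < a.1 := lt_of_le_of_lt (le_trans (min_le_right _ _) (min_le_left _ _)) (by linarith)
  have hηε : η < ε1 := lt_of_le_of_lt (min_le_left _ _) (by linarith)
  have hηc : a.1 + η < (cp μ₀).1 := by
    have hη' : η ≤ ((cp μ₀).1 - a.1) / 2 := le_trans (min_le_right _ _) (min_le_right _ _)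
    linarith
  have hvmZ : inZ ((a.1 - η, a.2) : ℝ × ℝ) := inZ_mk (by linarith) haZ.2.1 haZ.2.2
  have hvpZ : inZ ((a.1 + η, a.2) : ℝ × ℝ) := inZ_mk (by linarith) haZ.2.1 haZ.2.2
  have hmm := A.money_mono (a.1 - η) a.1 a.2 (by linarith) (by linarith) haZ.2.1 haZ.2.2
  have hmp := A.money_mono a.1 (a.1 + η) a.2 haZ.1 (by linarith) haZ.2.1 haZ.2.2
  have hamk : ((a.1, a.2) : ℝ × ℝ) = a := Prod.mk.eta
  have hO1₀ : ¬ A.R (cp μ₀) (a.1 - η, a.2) := fun h => hmm.2 (hamk ▸ rTrans A haI.1 h)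
  have hO2₀ : ¬ A.R (a.1 + η, a.2) (cp μ₀) := fun h => hmp.2 (hamk ▸ rTrans A h haI.2)
  have hO3₀ : ¬ B.R (a.1 - η, a.2) (cp μ₀) := by
    apply hball1 _ hvmZ
    · simp only
      rw [show a.1 - η - a.1 = -η by ring, abs_neg, abs_of_pos hη]
      exact hηε
    · simp only [sub_self, abs_zero]; exact hε1
  set O : Set ℝ := {μ | cp μ ∈ {w | inZ w ∧ A.R w (a.1 - η, a.2)}ᶜ} ∩
      ({μ | cp μ ∈ {w | inZ w ∧ A.R (a.1 + η, a.2) w}ᶜ} ∩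
      ({μ | cp μ ∈ {w | inZ w ∧ B.R (a.1 - η, a.2) w}ᶜ} ∩
      {μ | a.2 < (cp μ).2 ∧ a.1 + η < (cp μ).1})) with hOdef
  have hOopen : IsOpen O := by
    refine IsOpen.inter ?_ (IsOpen.inter ?_ (IsOpen.inter ?_ ?_))
    · exact (A.continuous (a.1 - η, a.2)).1.isOpen_compl.preimage hcont
    · exact (A.continuous (a.1 + η, a.2)).2.isOpen_compl.preimage hcont
    · exact (B.continuous (a.1 - η, a.2)).2.isOpen_compl.preimage hcont
    · exact IsOpen.inter (isOpen_lt continuous_const (continuous_snd.comp hcont))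
        (isOpen_lt continuous_const (continuous_fst.comp hcont))
  have hμ₀O : μ₀ ∈ O :=
    ⟨fun h => hO1₀ h.2, fun h => hO2₀ h.2, fun h => hO3₀ h.2, hac2, hηc⟩
  obtain ⟨ε, hε, hball⟩ := Metric.isOpen_iff.1 hOopen μ₀ hμ₀O
  refine ⟨ε, hε, ?_⟩
  intro μ hμ hμd
  have hμO : μ ∈ O := hball (by rwa [Metric.mem_ball, Real.dist_eq])
  obtain ⟨hm1, hm2, hm3, hm4a, hm4b⟩ := hμO
  have hcZμ : inZ (cp μ) := hcZ μ hμ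
  have hl : A.R (a.1 - η, a.2) (cp μ) := rOfNot A hcZμ hvmZ (fun h => hm1 ⟨hcZμ, h⟩)
  have hr : A.R (cp μ) (a.1 + η, a.2) := rOfNot A hvpZ hcZμ (fun h => hm2 ⟨hcZμ, h⟩)
  obtain ⟨t, ht0, ht1, htI⟩ := t_ivt A hcZμ (t0 := a.1 - η) (t1 := a.1 + η) (q := a.2)
    (by linarith) (by linarith) haZ.2.1 haZ.2.2 hl hr
  have htZ : inZ ((t, a.2) : ℝ × ℝ) := inZ_mk (by linarith) haZ.2.1 haZ.2.2
  refine ⟨(t, a.2), htZ, ⟨by simp only; linarith, by simp only; exact hm4a⟩, htI, ?_⟩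
  intro hcon
  have hdom : B.R ((a.1 - η, a.2) : ℝ × ℝ) ((t, a.2) : ℝ × ℝ) :=
    dom_weak B htZ hvmZ (by simp only; linarith) (by simp only; exact le_refl _)
  exact hm3 ⟨hcZμ, rTrans B hdom hcon⟩

lemma mopen_neg {A B : ClassicalPref} {cp : ℝ → ℝ × ℝ} (hcont : Continuous cp)
    (hcZ : ∀ μ ∈ Icc (0:ℝ) 1, inZ (cp μ)) :
    ∀ μ₀ ∈ Icc (0:ℝ) 1,
      (∃ a : ℝ × ℝ, inZ a ∧ 0 < a.1 ∧ a.1 < (cp μ₀).1 ∧ a.2 < (cp μ₀).2 ∧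
        Indiff A a (cp μ₀) ∧ ¬ B.R (cp μ₀) a) →
      ∃ ε > 0, ∀ μ ∈ Icc (0:ℝ) 1, |μ - μ₀| < ε →
        (∃ a : ℝ × ℝ, inZ a ∧ bLt a (cp μ) ∧ Indiff A a (cp μ) ∧ ¬ B.R (cp μ) a) := by
  rintro μ₀ hμ₀ ⟨a, haZ, ha1, hac1, hac2, haI, hsgn⟩
  obtain ⟨ε1, hε1, hball1⟩ := strict_nbhd_snd B haZ hsgn
  set η : ℝ := min (ε1 / 2) (min (a.1 / 2) (((cp μ₀).1 - a.1) / 2)) with hηdef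
  have hη : 0 < η := by
    apply lt_min (by positivity)
    apply lt_min <;> [positivity; (apply div_pos (by linarith) (by norm_num))]
  have hηa : η < a.1 := lt_of_le_of_lt (le_trans (min_le_right _ _) (min_le_left _ _)) (by linarith)
  have hηε : η < ε1 := lt_of_le_of_lt (min_le_left _ _) (by linarith)
  have hηc : a.1 + η < (cp μ₀).1 := by
    have hη' : η ≤ ((cp μ₀).1 - a.1) / 2 := le_trans (min_le_right _ _) (min_le_right _ _)
    linarith
  have hvmZ : inZ ((a.1 - η, a.2) : ℝ × ℝ) := inZ_mk (by linarith) haZ.2.1 haZ.2.2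
  have hvpZ : inZ ((a.1 + η, a.2) : ℝ × ℝ) := inZ_mk (by linarith) haZ.2.1 haZ.2.2
  have hmm := A.money_mono (a.1 - η) a.1 a.2 (by linarith) (by linarith) haZ.2.1 haZ.2.2
  have hmp := A.money_mono a.1 (a.1 + η) a.2 haZ.1 (by linarith) haZ.2.1 haZ.2.2
  have hamk : ((a.1, a.2) : ℝ × ℝ) = a := Prod.mk.eta
  have hO1₀ : ¬ A.R (cp μ₀) (a.1 - η, a.2) := fun h => hmm.2 (hamk ▸ rTrans A haI.1 h)
  have hO2₀ : ¬ A.R (a.1 + η, a.2) (cp μ₀) := fun h => hmp.2 (hamk ▸ rTrans A h haI.2)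
  have hO3₀ : ¬ B.R (cp μ₀) (a.1 + η, a.2) := by
    apply hball1 _ hvpZ
    · simp only
      rw [show a.1 + η - a.1 = η by ring, abs_of_pos hη]
      exact hηε
    · simp only [sub_self, abs_zero]; exact hε1
  set O : Set ℝ := {μ | cp μ ∈ {w | inZ w ∧ A.R w (a.1 - η, a.2)}ᶜ} ∩
      ({μ | cp μ ∈ {w | inZ w ∧ A.R (a.1 + η, a.2) w}ᶜ} ∩
      ({μ | cp μ ∈ {w | inZ w ∧ B.R w (a.1 + η, a.2)}ᶜ} ∩
      {μ | a.2 < (cp μ).2 ∧ a.1 + η < (cp μ).1})) with hOdef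
  have hOopen : IsOpen O := by
    refine IsOpen.inter ?_ (IsOpen.inter ?_ (IsOpen.inter ?_ ?_))
    · exact (A.continuous (a.1 - η, a.2)).1.isOpen_compl.preimage hcont
    · exact (A.continuous (a.1 + η, a.2)).2.isOpen_compl.preimage hcont
    · exact (B.continuous (a.1 + η, a.2)).1.isOpen_compl.preimage hcont
    · exact IsOpen.inter (isOpen_lt continuous_const (continuous_snd.comp hcont))
        (isOpen_lt continuous_const (continuous_fst.comp hcont))
  have hμ₀O : μ₀ ∈ O :=
    ⟨fun h => hO1₀ h.2, fun h => hO2₀ h.2, fun h => hO3₀ h.2, hac2, hηc⟩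
  obtain ⟨ε, hε, hball⟩ := Metric.isOpen_iff.1 hOopen μ₀ hμ₀O
  refine ⟨ε, hε, ?_⟩
  intro μ hμ hμd
  have hμO : μ ∈ O := hball (by rwa [Metric.mem_ball, Real.dist_eq])
  obtain ⟨hm1, hm2, hm3, hm4a, hm4b⟩ := hμO
  have hcZμ : inZ (cp μ) := hcZ μ hμ
  have hl : A.R (a.1 - η, a.2) (cp μ) := rOfNot A hcZμ hvmZ (fun h => hm1 ⟨hcZμ, h⟩)
  have hr : A.R (cp μ) (a.1 + η, a.2) := rOfNot A hvpZ hcZμ (fun h => hm2 ⟨hcZμ, h⟩)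
  obtain ⟨t, ht0, ht1, htI⟩ := t_ivt A hcZμ (t0 := a.1 - η) (t1 := a.1 + η) (q := a.2)
    (by linarith) (by linarith) haZ.2.1 haZ.2.2 hl hr
  have htZ : inZ ((t, a.2) : ℝ × ℝ) := inZ_mk (by linarith) haZ.2.1 haZ.2.2
  refine ⟨(t, a.2), htZ, ⟨by simp only; linarith, by simp only; exact hm4a⟩, htI, ?_⟩
  intro hcon
  have hdom : B.R ((t, a.2) : ℝ × ℝ) ((a.1 + η, a.2) : ℝ × ℝ) :=
    dom_weak B hvpZ htZ (by simp only; linarith) (by simp only; exact le_refl _)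
  exact hm3 ⟨hcZμ, rTrans B hcon hdom⟩

end SIL
namespace SIL

open Set

lemma convex_mem {x y μ : ℝ} (hx : 0 ≤ x) (hy : 0 ≤ y) (hμ0 : 0 ≤ μ) (hμ1 : μ ≤ 1) :
    0 ≤ (1 - μ) * x + μ * y := by
  have h1 : 0 ≤ (1 - μ) * x := mul_nonneg (by linarith) hx
  have h2 : 0 ≤ μ * y := mul_nonneg hμ0 hy
  linarith

lemma convex_le_one {x y μ : ℝ} (hx : x ≤ 1) (hy : y ≤ 1) (hμ0 : 0 ≤ μ) (hμ1 : μ ≤ 1) :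
    (1 - μ) * x + μ * y ≤ 1 := by
  have h1 : (1 - μ) * x ≤ (1 - μ) * 1 := by
    apply mul_le_mul_of_nonneg_left hx (by linarith)
  have h2 : μ * y ≤ μ * 1 := mul_le_mul_of_nonneg_left hy hμ0
  nlinarith

lemma convex_pos {x y μ : ℝ} (hx : 0 < x) (hy : 0 < y) (hμ0 : 0 ≤ μ) (hμ1 : μ ≤ 1) :
    0 < (1 - μ) * x + μ * y := by
  rcases le_total μ (1/2) with h | h
  · have h1 : (1/2 : ℝ) * x ≤ (1 - μ) * x := by
      apply mul_le_mul_of_nonneg_right (by linarith) (le_of_lt hx)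
    have h2 : 0 ≤ μ * y := mul_nonneg hμ0 (le_of_lt hy)
    nlinarith
  · have h1 : (1/2 : ℝ) * y ≤ μ * y := by
      apply mul_le_mul_of_nonneg_right (by linarith) (le_of_lt hy)
    have h2 : 0 ≤ (1 - μ) * x := mul_nonneg (by linarith) (le_of_lt hx)
    nlinarith

/-- The heart of the single-crossing comparison: two `A`-indifference pairs with
opposite strict `B`-signs are impossible. -/
lemma master_core {A B : ClassicalPref} (hsc : SingleCrossing A B)
    {p f u z : ℝ × ℝ} (hpZ : inZ p) (hfZ : inZ f) (huZ : inZ u) (hzZ : inZ z)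
    (hpf : bLt p f) (huz : bLt u z)
    (hIp : Indiff A p f) (hIu : Indiff A u z)
    (hsp : ¬ B.R p f) (hsu : ¬ B.R z u) : False := by
  set cp : ℝ → ℝ × ℝ :=
    fun μ => (((1 - μ) * f.1 + μ * z.1, (1 - μ) * f.2 + μ * z.2) : ℝ × ℝ) with hcp
  have hf1 : 0 < f.1 := lt_of_le_of_lt hpZ.1 hpf.1
  have hf2 : 0 < f.2 := lt_of_le_of_lt hpZ.2.1 hpf.2
  have hz1 : 0 < z.1 := lt_of_le_of_lt huZ.1 huz.1
  have hz2 : 0 < z.2 := lt_of_le_of_lt huZ.2.1 huz.2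
  have hcont : Continuous cp := by rw [hcp]; fun_prop
  have hcZ : ∀ μ ∈ Icc (0:ℝ) 1, inZ (cp μ) := by
    intro μ hμ
    rw [hcp]
    exact inZ_mk (convex_mem hfZ.1 hzZ.1 hμ.1 hμ.2) (convex_mem hfZ.2.1 hzZ.2.1 hμ.1 hμ.2)
      (convex_le_one hfZ.2.2 hzZ.2.2 hμ.1 hμ.2)
  have hcpos1 : ∀ μ ∈ Icc (0:ℝ) 1, 0 < (cp μ).1 := by
    intro μ hμ
    rw [hcp]
    exact convex_pos hf1 hz1 hμ.1 hμ.2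
  have hcpos2 : ∀ μ ∈ Icc (0:ℝ) 1, 0 < (cp μ).2 := by
    intro μ hμ
    rw [hcp]
    exact convex_pos hf2 hz2 hμ.1 hμ.2
  have hc0 : cp 0 = f := by
    rw [hcp]
    exact Prod.ext (by norm_num) (by norm_num)
  have hc1 : cp 1 = z := by
    rw [hcp]
    exact Prod.ext (by norm_num) (by norm_num)
  have hdich : ∀ μ ∈ Icc (0:ℝ) 1, ∀ a : ℝ × ℝ, inZ a → bLt a (cp μ) → Indiff A a (cp μ) →
      (¬ B.R a (cp μ)) ∨ (¬ B.R (cp μ) a) := by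
    intro μ hμ a haZ hblt haI
    by_contra hcon
    push_neg at hcon
    have := noDouble hsc haZ (hcZ μ hμ) haI ⟨hcon.1, hcon.2⟩
    rw [this] at hblt
    exact lt_irrefl _ hblt.1
  apply no_split (le_of_lt one_pos)
    (P := fun μ => ∃ a : ℝ × ℝ, inZ a ∧ bLt a (cp μ) ∧ Indiff A a (cp μ) ∧ ¬ B.R a (cp μ))
    (Q := fun μ => ∃ a : ℝ × ℝ, inZ a ∧ bLt a (cp μ) ∧ Indiff A a (cp μ) ∧ ¬ B.R (cp μ) a)
  · -- cover
    intro μ hμ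
    obtain ⟨a, haZ, haI, h1, h2, h3, h4⟩ :=
      exists_below A (hcZ μ hμ) (hcpos1 μ hμ) (hcpos2 μ hμ)
    have hblt : bLt a (cp μ) := ⟨h2, h4⟩
    rcases hdich μ hμ a haZ hblt haI with h | h
    · exact Or.inl ⟨a, haZ, hblt, haI, h⟩
    · exact Or.inr ⟨a, haZ, hblt, haI, h⟩
  · -- disjoint
    rintro μ hμ ⟨a, haZ, hab, haI, hs⟩ ⟨a', ha'Z, hab', ha'I, hs'⟩
    exact sign_const hsc (hcZ μ hμ) haZ ha'Z haI ha'I hab hab' hs hs'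
  · -- openness of M+
    rintro μ₀ hμ₀ ⟨a₀, ha₀Z, ha₀b, ha₀I, hs₀⟩
    obtain ⟨a, haZ, haI, h1, h2, h3, h4⟩ :=
      exists_below A (hcZ μ₀ hμ₀) (hcpos1 μ₀ hμ₀) (hcpos2 μ₀ hμ₀)
    have hblt : bLt a (cp μ₀) := ⟨h2, h4⟩
    rcases hdich μ₀ hμ₀ a haZ hblt haI with h | h
    · exact mopen_pos hcont hcZ μ₀ hμ₀ ⟨a, haZ, h1, h2, h4, haI, h⟩
    · exact (sign_const hsc (hcZ μ₀ hμ₀) ha₀Z haZ ha₀I haI ha₀b hblt hs₀ h).elim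
  · -- openness of M-
    rintro μ₀ hμ₀ ⟨a₀, ha₀Z, ha₀b, ha₀I, hs₀⟩
    obtain ⟨a, haZ, haI, h1, h2, h3, h4⟩ :=
      exists_below A (hcZ μ₀ hμ₀) (hcpos1 μ₀ hμ₀) (hcpos2 μ₀ hμ₀)
    have hblt : bLt a (cp μ₀) := ⟨h2, h4⟩
    rcases hdich μ₀ hμ₀ a haZ hblt haI with h | h
    · exact (sign_const hsc (hcZ μ₀ hμ₀) haZ ha₀Z haI ha₀I hblt ha₀b h hs₀).elim
    · exact mopen_neg hcont hcZ μ₀ hμ₀ ⟨a, haZ, h1, h2, h4, haI, h⟩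
  · -- endpoint 0
    rw [show (∃ a : ℝ × ℝ, inZ a ∧ bLt a (cp 0) ∧ Indiff A a (cp 0) ∧ ¬ B.R a (cp 0)) =
      (∃ a : ℝ × ℝ, inZ a ∧ bLt a f ∧ Indiff A a f ∧ ¬ B.R a f) from by rw [hc0]]
    exact ⟨p, hpZ, hpf, hIp, hsp⟩
  · -- endpoint 1
    rw [show (∃ a : ℝ × ℝ, inZ a ∧ bLt a (cp 1) ∧ Indiff A a (cp 1) ∧ ¬ B.R (cp 1) a) =
      (∃ a : ℝ × ℝ, inZ a ∧ bLt a z ∧ Indiff A a z ∧ ¬ B.R z a) from by rw [hc1]]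
    exact ⟨u, huZ, huz, hIu, hsu⟩

end SIL
namespace SIL

open Set

/-- MASTER: a single weak/strict disagreement on a diagonal pair orders the two
preferences. -/
lemma master {A B : ClassicalPref} (hsc : SingleCrossing A B) {e f : ℝ × ℝ}
    (he : inZ e) (hf : inZ f) (hef : bLt e f) (h1 : A.R e f) (h2 : ¬ B.R e f) : Prec A B := by
  intro z hz w hw hble hBwz
  by_contra hAwz
  rcases hble with heq | hblt
  · rw [heq] at hAwz
    exact hAwz (rRefl A hz)
  -- normalize pair 1 : an A-indifference pair below f with strict B-sign
  have hqm1 := A.q_mono f.1 e.2 f.2 hf.1 he.2.1 hef.2 hf.2.2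
  have hr1 : A.R f (f.1, e.2) := by
    have := hqm1.1
    rwa [Prod.mk.eta] at this
  obtain ⟨tp, htp0, htp1, hIp⟩ := t_ivt A hf (le_of_lt hef.1) he.1 he.2.1
    (le_trans (le_of_lt hef.2) hf.2.2) (by rw [Prod.mk.eta]; exact h1) hr1
  have htpne : tp ≠ f.1 := by
    intro h
    rw [h] at hIp
    have := hIp.1
    rw [show f = (f.1, f.2) from (Prod.mk.eta).symm] at this
    exact hqm1.2 this
  have hpZ : inZ ((tp, e.2) : ℝ × ℝ) := inZ_mk (le_trans he.1 htp0) he.2.1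
    (le_trans (le_of_lt hef.2) hf.2.2)
  have hpblt : bLt ((tp, e.2) : ℝ × ℝ) f := ⟨lt_of_le_of_ne htp1 htpne, hef.2⟩
  have hsgnp : ¬ B.R (tp, e.2) f := by
    intro h
    have hdom : B.R e ((tp, e.2) : ℝ × ℝ) :=
      dom_weak B hpZ he (by simp only; exact htp0) (by simp only; exact le_refl _)
    exact h2 (rTrans B hdom h)
  -- normalize pair 2 : a B-indifference pair below z
  have hqm2 := B.q_mono z.1 w.2 z.2 hz.1 hw.2.1 hblt.2 hz.2.2
  have hr2 : B.R z (z.1, w.2) := by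
    have := hqm2.1
    rwa [Prod.mk.eta] at this
  obtain ⟨tw, htw0, htw1, hIw⟩ := t_ivt B hz (le_of_lt hblt.1) hw.1 hw.2.1
    (le_trans (le_of_lt hblt.2) hz.2.2) (by rw [Prod.mk.eta]; exact hBwz) hr2
  have htwne : tw ≠ z.1 := by
    intro h
    rw [h] at hIw
    have := hIw.1
    rw [show z = (z.1, z.2) from (Prod.mk.eta).symm] at this
    exact hqm2.2 this
  have htwlt : tw < z.1 := lt_of_le_of_ne htw1 htwne
  have htw0' : 0 ≤ tw := le_trans hw.1 htw0
  have hw'Z : inZ ((tw, w.2) : ℝ × ℝ) := inZ_mk htw0' hw.2.1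
    (le_trans (le_of_lt hblt.2) hz.2.2)
  have hAw' : ¬ A.R (tw, w.2) z := by
    intro h
    have hdom : A.R w ((tw, w.2) : ℝ × ℝ) :=
      dom_weak A hw'Z hw (by simp only; exact htw0) (by simp only; exact le_refl _)
    exact hAwz (rTrans A hdom h)
  -- normalize pair 3 : an A-indifference pair below z with strict B-sign
  have hmm3 := A.money_mono tw z.1 z.2 htw0' htwlt hz.2.1 hz.2.2
  have hr3 : A.R (tw, z.2) z := by
    have := hmm3.1
    rwa [Prod.mk.eta] at this
  obtain ⟨qu, hqu0, hqu1, hIu⟩ := q_ivt A hz (le_of_lt hblt.2) htw0' hw.2.1 hz.2.2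
    (rOfNot A hw'Z hz hAw') hr3
  have hquw : qu ≠ w.2 := by
    intro h
    rw [h] at hIu
    exact hAw' hIu.1
  have hquz : qu ≠ z.2 := by
    intro h
    rw [h] at hIu
    have := hIu.2
    rw [show z = (z.1, z.2) from (Prod.mk.eta).symm] at this
    exact hmm3.2 this
  have huZ : inZ ((tw, qu) : ℝ × ℝ) := inZ_mk htw0' (le_trans hw.2.1 hqu0)
    (le_trans hqu1 hz.2.2)
  have hsgnu : ¬ B.R z (tw, qu) := by
    intro h
    have hqmB := B.q_mono tw w.2 qu htw0' hw.2.1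
      (lt_of_le_of_ne hqu0 (Ne.symm hquw)) (le_trans hqu1 hz.2.2)
    exact hqmB.2 (rTrans B hIw.1 h)
  exact master_core hsc hpZ hf huZ hz hpblt
    ⟨htwlt, lt_of_le_of_ne hqu1 hquz⟩ hIp hIu hsgnp hsgnu

/-- CORE: weakly preferring the lower bundle of an indifference pair of `B`
places `A` weakly below `B`. -/
lemma core {D : Set ClassicalPref}
    (hD : ∀ A' ∈ D, ∀ B' ∈ D, A' ≠ B' → SingleCrossing A' B')
    {A B : ClassicalPref} (hAD : A ∈ D) (hBD : B ∈ D)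
    {x y : ℝ × ℝ} (hx : inZ x) (hy : inZ y) (hxy : bLt x y)
    (hBI : Indiff B x y) (hA : A.R x y) : PrecSim A B := by
  by_cases hne : A = B
  · exact Or.inl hne
  have hsc := hD A hAD B hBD hne
  right
  -- normalize A"s side: raise the payment of x until A is indifferent
  have hqm := A.q_mono y.1 x.2 y.2 hy.1 hx.2.1 hxy.2 hy.2.2
  have hr : A.R y (y.1, x.2) := by
    have := hqm.1
    rwa [Prod.mk.eta] at this
  obtain ⟨tp, htp0, htp1, hIp⟩ := t_ivt A hy (le_of_lt hxy.1) hx.1 hx.2.1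
    (le_trans (le_of_lt hxy.2) hy.2.2) (by rw [Prod.mk.eta]; exact hA) hr
  have htpne : tp ≠ y.1 := by
    intro h
    rw [h] at hIp
    have := hIp.1
    rw [show y = (y.1, y.2) from (Prod.mk.eta).symm] at this
    exact hqm.2 this
  have hpZ : inZ ((tp, x.2) : ℝ × ℝ) := inZ_mk (le_trans hx.1 htp0) hx.2.1
    (le_trans (le_of_lt hxy.2) hy.2.2)
  by_cases hteq : tp = x.1
  · -- A is indifferent on (x, y) : shared pair, contradiction with A ≠ B
    rw [hteq] at hIp
    rw [Prod.mk.eta] at hIp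
    have := noDouble hsc hx hy hIp hBI
    rw [this] at hxy
    exact absurd hxy.1 (lt_irrefl _)
  · -- strict raise : B strictly prefers y to p
    have htplt : x.1 < tp := lt_of_le_of_ne htp0 (Ne.symm hteq)
    have hsgn : ¬ B.R (tp, x.2) y := by
      intro h
      have hmB := B.money_mono x.1 tp x.2 hx.1 htplt hx.2.1 hx.2.2
      have hpx : B.R (tp, x.2) x := rTrans B h hBI.2
      rw [show x = (x.1, x.2) from (Prod.mk.eta).symm] at hpx
      exact hmB.2 hpx
    exact master hsc hpZ hy ⟨lt_of_le_of_ne htp1 htpne, hxy.2⟩ hIp.1 hsgn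

end SIL
namespace SIL

open Set

/-- CORE': strictly preferring the upper bundle of a `B`-indifference pair places
`B` below `A`. -/
lemma core_strict {D : Set ClassicalPref}
    (hD : ∀ A' ∈ D, ∀ B' ∈ D, A' ≠ B' → SingleCrossing A' B')
    {A B : ClassicalPref} (hAD : A ∈ D) (hBD : B ∈ D)
    {x y : ℝ × ℝ} (hx : inZ x) (hy : inZ y) (hxy : bLt x y)
    (hBI : Indiff B x y) (hA : ¬ A.R x y) : Prec B A := by
  have hne : B ≠ A := fun h => hA (h ▸ hBI.1)
  exact master (hD B hBD A hAD hne) hx hy hxy hBI.1 hA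

/-- MIRROR-CORE: weakly preferring the upper bundle of a `B`-indifference pair
places `B` weakly below `A`. -/
lemma core_hi {D : Set ClassicalPref}
    (hD : ∀ A' ∈ D, ∀ B' ∈ D, A' ≠ B' → SingleCrossing A' B')
    {A B : ClassicalPref} (hAD : A ∈ D) (hBD : B ∈ D)
    {x y : ℝ × ℝ} (hx : inZ x) (hy : inZ y) (hxy : bLt x y)
    (hBI : Indiff B x y) (hA : A.R y x) : PrecSim B A := by
  by_cases hne : B = A
  · exact Or.inl hne
  right
  have hneAB : A ≠ B := Ne.symm hne
  -- raise the share of x until A is indifferent with y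
  have hm := A.money_mono x.1 y.1 y.2 hx.1 hxy.1 hy.2.1 hy.2.2
  have hr : A.R (x.1, y.2) y := by
    have := hm.1
    rwa [Prod.mk.eta] at this
  obtain ⟨qs, hqs0, hqs1, hIu⟩ := q_ivt A hy (le_of_lt hxy.2) hx.1 hx.2.1 hy.2.2
    (by rw [Prod.mk.eta]; exact hA) hr
  have hqsy : qs ≠ y.2 := by
    intro h
    rw [h] at hIu
    have := hIu.2
    rw [show y = (y.1, y.2) from (Prod.mk.eta).symm] at this
    exact hm.2 this
  have huZ : inZ ((x.1, qs) : ℝ × ℝ) := inZ_mk hx.1 (le_trans hx.2.1 hqs0)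
    (le_trans hqs1 hy.2.2)
  by_cases hqeq : qs = x.2
  · -- A indifferent on (x,y) : shared pair
    rw [hqeq, Prod.mk.eta] at hIu
    have := noDouble (hD A hAD B hBD hneAB) hx hy hIu hBI
    rw [this] at hxy
    exact absurd hxy.1 (lt_irrefl _)
  have hqlt : x.2 < qs := lt_of_le_of_ne hqs0 (Ne.symm hqeq)
  -- B strictly prefers u = (x.1, qs) to y
  have hqB := B.q_mono x.1 x.2 qs hx.1 hx.2.1 hqlt (le_trans hqs1 hy.2.2)
  have hByu : ¬ B.R y (x.1, qs) := by
    intro h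
    have : B.R x (x.1, qs) := rTrans B hBI.1 h
    rw [show x = (x.1, x.2) from (Prod.mk.eta).symm] at this
    exact hqB.2 this
  obtain ⟨ε, hε, hball⟩ := strict_nbhd_snd B huZ hByu
  set r : ℝ := min (ε / 2) ((y.1 - x.1) / 2) with hrdef
  have hr0 : 0 < r := by
    apply lt_min (by positivity)
    have := hxy.1
    apply div_pos (by linarith) (by norm_num)
  have hrε : r < ε := lt_of_le_of_lt (min_le_left _ _) (by linarith)
  have hry : x.1 + r < y.1 := by
    have := min_le_right (ε / 2) ((y.1 - x.1) / 2)
    have h2 : r ≤ (y.1 - x.1) / 2 := this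
    linarith [hxy.1]
  have hp'Z : inZ ((x.1 + r, qs) : ℝ × ℝ) := inZ_mk (by linarith [hx.1]) (le_trans hx.2.1 hqs0)
    (le_trans hqs1 hy.2.2)
  have hBp' : B.R (x.1 + r, qs) y := by
    apply rOfNot B hy hp'Z
    apply hball _ hp'Z
    · simp only
      rw [show x.1 + r - x.1 = r by ring, abs_of_pos hr0]
      exact hrε
    · simp only [sub_self, abs_zero]; exact hε
  have hAp' : ¬ A.R (x.1 + r, qs) y := by
    intro h
    have hmA := A.money_mono x.1 (x.1 + r) qs hx.1 (by linarith) (le_trans hx.2.1 hqs0)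
      (le_trans hqs1 hy.2.2)
    exact hmA.2 (rTrans A h hIu.2)
  have hblt : bLt ((x.1 + r, qs) : ℝ × ℝ) y :=
    ⟨by simp only; exact hry, by simp only; exact lt_of_le_of_ne hqs1 hqsy⟩
  exact master (hD B hBD A hAD hne) hp'Z hy hblt hBp' hAp'

lemma prec_refl (A : ClassicalPref) : Prec A A := fun _ _ _ _ _ h => h

lemma precSim_refl (A : ClassicalPref) : PrecSim A A := Or.inl rfl

lemma prec_trans {A B C : ClassicalPref} (h1 : Prec A B) (h2 : Prec B C) : Prec A C :=
  fun z hz w hw hble h => h1 z hz w hw hble (h2 z hz w hw hble h)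

lemma precSim_trans {A B C : ClassicalPref} (h1 : PrecSim A B) (h2 : PrecSim B C) :
    PrecSim A C := by
  rcases h1 with rfl | h1
  · exact h2
  rcases h2 with rfl | h2
  · exact Or.inr h1
  exact Or.inr (prec_trans h1 h2)

/-- transfer of a low-favoring weak preference down the order -/
lemma precSim_R {X Y : ClassicalPref} (h : PrecSim X Y) {w z : ℝ × ℝ}
    (hz : inZ z) (hw : inZ w) (hble : bLe w z) (hY : Y.R w z) : X.R w z := by
  rcases h with rfl | h
  · exact hY
  · exact h z hz w hw hble hY

/-- contrapositive transfer of a strict high-favoring preference up the order -/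
lemma precSim_not_R {X Y : ClassicalPref} (h : PrecSim X Y) {w z : ℝ × ℝ}
    (hz : inZ z) (hw : inZ w) (hble : bLe w z) (hX : ¬ X.R w z) : ¬ Y.R w z :=
  fun hY => hX (precSim_R h hz hw hble hY)

end SIL
namespace SIL

open Set

/-- two members of a single-crossing family sharing a non-degenerate indifference
pair must coincide. -/
lemma sharedPair {D : Set ClassicalPref}
    (hD : ∀ A' ∈ D, ∀ B' ∈ D, A' ≠ B' → SingleCrossing A' B')
    {X Y : ClassicalPref} (hX : X ∈ D) (hY : Y ∈ D) {c d : ℝ × ℝ}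
    (hc : inZ c) (hd : inZ d) (hcd : c ≠ d)
    (h1 : Indiff X c d) (h2 : Indiff Y c d) : X = Y := by
  by_contra hne
  exact hcd (noDouble (hD X hX Y hY hne) hc hd h1 h2)

/-- mutually weakly preferred distinct bundles are diagonal. -/
lemma trichotomy (X Y : ClassicalPref) {a b : ℝ × ℝ} (ha : inZ a) (hb : inZ b)
    (hne : a ≠ b) (h1 : X.R a b) (h2 : Y.R b a) : bLt b a ∨ bLt a b := by
  rcases lt_trichotomy a.1 b.1 with hc1 | hc1 | hc1 <;>
    rcases lt_trichotomy a.2 b.2 with hc2 | hc2 | hc2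
  · exact Or.inr ⟨hc1, hc2⟩
  · exact absurd h2 (dom_strict Y hb ha (le_of_lt hc1) (le_of_eq hc2.symm) (Or.inl hc1))
  · exact absurd h2 (dom_strict Y hb ha (le_of_lt hc1) (le_of_lt hc2) (Or.inl hc1))
  · exact absurd h1 (dom_strict X ha hb (le_of_eq hc1.symm) (le_of_lt hc2) (Or.inr hc2))
  · exact absurd (Prod.ext hc1 hc2) hne
  · exact absurd h2 (dom_strict Y hb ha (le_of_eq hc1) (le_of_lt hc2) (Or.inr hc2))
  · exact absurd h1 (dom_strict X ha hb (le_of_lt hc1) (le_of_lt hc2) (Or.inl hc1))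
  · exact absurd h1 (dom_strict X ha hb (le_of_lt hc1) (le_of_eq hc2) (Or.inl hc1))
  · exact Or.inl ⟨hc1, hc2⟩

end SIL

namespace SIL

/-- limit trick: if every slight rightward perturbation of `v` is strictly worse
than `z`, then `z` is weakly preferred to `v`. -/
lemma limit_up (X : ClassicalPref) {v z : ℝ × ℝ} (hv : inZ v) (hz : inZ z)
    (hlt : v.1 < z.1)
    (h : ∀ r : ℝ, 0 < r → r ≤ (z.1 - v.1) / 2 → ¬ X.R (v.1 + r, v.2) z) : X.R z v := by
  have hε : 0 < (z.1 - v.1) / 2 := by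
    apply div_pos (by linarith) (by norm_num)
  apply limit_t X hε
  · intro r hr1 hr2
    exact rOfNot X (inZ_mk (by linarith [hv.1]) hv.2.1 hv.2.2) hz (h r hr1 hr2)
  · intro r hr1 hr2
    exact inZ_mk (by linarith [hv.1]) hv.2.1 hv.2.2

end SIL

open SIL

/-- Supremum/infimum at limit points of the range. Let F be a
strategy-proof, individually rational mechanism on an interval [R̲,R̄] of a rich
single-crossing domain and let R' be in the interval. If R* is the supremum (for
≺) of {R : F(R)=F(R')} and there is a sequence of range bundles strictly
decreasing to F(R') from above, then F(R*)=F(R'); symmetrically, if R** is the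
infimum and there is a sequence of range bundles strictly increasing to F(R')
from below, then F(R**)=F(R'). -/
theorem sup_inf_at_limit_points
    (D : Set ClassicalPref) (hD : RichSC D)
    (Rlo Rhi : ClassicalPref) (hlo : Rlo ∈ D) (hhi : Rhi ∈ D)
    (Dom : Set ClassicalPref)
    (hDom : Dom = {A | A ∈ D ∧ PrecSim Rlo A ∧ PrecSim A Rhi})
    (F : ClassicalPref → ℝ × ℝ)
    (hFZ : ∀ A ∈ Dom, inZ (F A))
    (hSP : ∀ A ∈ Dom, ∀ B ∈ Dom, A.R (F A) (F B))
    (hIR : ∀ A ∈ Dom, A.R (F A) (0, 0))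
    (R' : ClassicalPref) (hR' : R' ∈ Dom) :
    (∀ Rstar ∈ Dom,
      ((∀ A ∈ Dom, F A = F R' → PrecSim A Rstar) ∧
        (∀ U ∈ Dom, (∀ A ∈ Dom, F A = F R' → PrecSim A U) → PrecSim Rstar U)) →
      (∃ seq : ℕ → ClassicalPref, (∀ n, seq n ∈ Dom) ∧
        (∀ n, bLt (F R') (F (seq n)) ∧ bLt (F (seq (n + 1))) (F (seq n))) ∧
        Filter.Tendsto (fun n => F (seq n)) Filter.atTop (nhds (F R'))) →
      F Rstar = F R') ∧
    (∀ Rstarstar ∈ Dom,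
      ((∀ A ∈ Dom, F A = F R' → PrecSim Rstarstar A) ∧
        (∀ L ∈ Dom, (∀ A ∈ Dom, F A = F R' → PrecSim L A) → PrecSim L Rstarstar)) →
      (∃ seq : ℕ → ClassicalPref, (∀ n, seq n ∈ Dom) ∧
        (∀ n, bLt (F (seq n)) (F R') ∧ bLt (F (seq n)) (F (seq (n + 1)))) ∧
        Filter.Tendsto (fun n => F (seq n)) Filter.atTop (nhds (F R'))) →
      F Rstarstar = F R') := by
  classical
  have hDsc := hD.1
  have hrich := hD.2
  have hmem : ∀ {X : ClassicalPref}, X ∈ Dom → X ∈ D ∧ PrecSim Rlo X ∧ PrecSim X Rhi := by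
    intro X hX; rwa [hDom] at hX
  have hz'Z : inZ (F R') := hFZ R' hR'
  constructor
  · -- PART 1 : supremum
    rintro Rstar hRstarD ⟨hub, hlub⟩ ⟨seq, hseqDom, hseqlt, htend⟩
    by_contra hne
    have hzsZ : inZ (F Rstar) := hFZ Rstar hRstarD
    have hznZ : ∀ n, inZ (F (seq n)) := fun n => hFZ _ (hseqDom n)
    have hRs1 : Rstar.R (F Rstar) (F R') := hSP Rstar hRstarD R' hR'
    have hR'1 : R'.R (F R') (F Rstar) := hSP R' hR' Rstar hRstarD
    -- E1 : R* weakly prefers F R' to every F (seq n)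
    have hE1 : ∀ n, Rstar.R (F R') (F (seq n)) := by
      intro n
      have hblt : bLt (F R') (F (seq n)) := (hseqlt n).1
      by_cases hcase : Rhi.R (F R') (F (seq n))
      · exact precSim_R (hmem hRstarD).2.2 (hznZ n) hz'Z (Or.inr hblt) hcase
      · obtain ⟨B1, hB1D, hB1I⟩ := hrich _ _ hz'Z (hznZ n) hblt
        have hRhiPrec : Prec B1 Rhi :=
          core_strict hDsc hhi hB1D hz'Z (hznZ n) hblt hB1I hcase
        have hRlolow : Rlo.R (F R') (F (seq n)) :=
          precSim_R (hmem hR').2.1 (hznZ n) hz'Z (Or.inr hblt) (hSP R' hR' (seq n) (hseqDom n))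
        have hRloB1 : PrecSim Rlo B1 :=
          core hDsc hlo hB1D hz'Z (hznZ n) hblt hB1I hRlolow
        have hB1Dom : B1 ∈ Dom := by rw [hDom]; exact ⟨hB1D, hRloB1, Or.inr hRhiPrec⟩
        have hB1ub : ∀ X ∈ Dom, F X = F R' → PrecSim X B1 := by
          intro X hX hFX
          have hXlow : X.R (F R') (F (seq n)) := by
            have := hSP X hX (seq n) (hseqDom n)
            rwa [hFX] at this
          exact core hDsc (hmem hX).1 hB1D hz'Z (hznZ n) hblt hB1I hXlow
        exact precSim_R (hlub B1 hB1Dom hB1ub) (hznZ n) hz'Z (Or.inr hblt) hB1I.1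
    rcases trichotomy Rstar R' hzsZ hz'Z (fun h => hne h) hRs1 hR'1 with hmain | hcase
    · -- MAIN case : F R' strictly below F R*
      -- W' step : R* weakly prefers F R' to F R*
      have hRszz : Rstar.R (F R') (F Rstar) := by
        by_cases hcase2 : Rhi.R (F R') (F Rstar)
        · exact precSim_R (hmem hRstarD).2.2 hzsZ hz'Z (Or.inr hmain) hcase2
        · obtain ⟨W, hWD, hWI⟩ := hrich _ _ hz'Z hzsZ hmain
          have hWRhi : Prec W Rhi := core_strict hDsc hhi hWD hz'Z hzsZ hmain hWI hcase2
          have hRloW : PrecSim Rlo W :=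
            core hDsc hlo hWD hz'Z hzsZ hmain hWI
              (precSim_R (hmem hR').2.1 hzsZ hz'Z (Or.inr hmain) hR'1)
          have hWDom : W ∈ Dom := by rw [hDom]; exact ⟨hWD, hRloW, Or.inr hWRhi⟩
          have hWub : ∀ X ∈ Dom, F X = F R' → PrecSim X W := by
            intro X hX hFX
            have hXlow : X.R (F R') (F Rstar) := by
              have := hSP X hX Rstar hRstarD
              rwa [hFX] at this
            exact core hDsc (hmem hX).1 hWD hz'Z hzsZ hmain hWI hXlow
          exact precSim_R (hlub W hWDom hWub) hzsZ hz'Z (Or.inr hmain) hWI.1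
      -- eventually the sequence is below F R*
      obtain ⟨N, hN⟩ : ∃ N, ∀ n ≥ N, bLt (F (seq n)) (F Rstar) := by
        have h1 : Filter.Tendsto (fun n => (F (seq n)).1) Filter.atTop (nhds (F R').1) :=
          (Continuous.tendsto continuous_fst _).comp htend
        have h2 : Filter.Tendsto (fun n => (F (seq n)).2) Filter.atTop (nhds (F R').2) :=
          (Continuous.tendsto continuous_snd _).comp htend
        have e1 := h1.eventually_lt_const hmain.1
        have e2 := h2.eventually_lt_const hmain.2
        obtain ⟨N, hN⟩ := Filter.eventually_atTop.1 (e1.and e2)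
        exact ⟨N, fun n hn => ⟨(hN n hn).1, (hN n hn).2⟩⟩
      -- the α case is impossible
      have hαFalse : ∀ m, bLt (F (seq m)) (F Rstar) → Rstar.R (F (seq m)) (F R') → False := by
        intro m hblt2 hα
        have hmne : seq m ≠ Rstar := by
          intro h
          have := congrArg F h
          rw [this] at hblt2
          exact lt_irrefl _ hblt2.1
        have hIndzzm : Indiff Rstar (F R') (F (seq m)) := ⟨hE1 m, hα⟩
        have hIndzmzs : Indiff Rstar (F (seq m)) (F Rstar) :=
          ⟨rTrans Rstar hα hRszz, hSP Rstar hRstarD (seq m) (hseqDom m)⟩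
        have hstrict1 : ¬ (seq m).R (F R') (F (seq m)) := by
          intro h
          exact hmne (sharedPair hDsc (hmem (hseqDom m)).1 (hmem hRstarD).1 hz'Z (hznZ m)
            (fun hh => lt_irrefl _ (hh ▸ (hseqlt m).1.1))
            ⟨h, hSP (seq m) (hseqDom m) R' hR'⟩ hIndzzm)
        have hstrict2 : ¬ (seq m).R (F Rstar) (F (seq m)) := by
          intro h
          exact hmne (sharedPair hDsc (hmem (hseqDom m)).1 (hmem hRstarD).1 (hznZ m) hzsZ
            (fun hh => lt_irrefl _ (hh ▸ hblt2.1))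
            ⟨hSP (seq m) (hseqDom m) Rstar hRstarD, h⟩ hIndzmzs)
        have hMaster : Prec Rstar (seq m) :=
          master (hDsc Rstar (hmem hRstarD).1 (seq m) (hmem (hseqDom m)).1 (Ne.symm hmne))
            hz'Z (hznZ m) (hseqlt m).1 hIndzzm.1 hstrict1
        apply hstrict2
        apply limit_up (seq m) (hznZ m) hzsZ hblt2.1
        intro r hr1 hr2
        intro hcon
        have hζZ : inZ ((((F (seq m)).1 + r, (F (seq m)).2)) : ℝ × ℝ) :=
          inZ_mk (by linarith [(hznZ m).1]) (hznZ m).2.1 (hznZ m).2.2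
        have hζblt : bLt (((F (seq m)).1 + r, (F (seq m)).2) : ℝ × ℝ) (F Rstar) :=
          ⟨by simp only; linarith [hblt2.1], by simp only; exact hblt2.2⟩
        have hRstarζ : ¬ Rstar.R ((F (seq m)).1 + r, (F (seq m)).2) (F Rstar) := by
          intro h
          have hm := Rstar.money_mono (F (seq m)).1 ((F (seq m)).1 + r) (F (seq m)).2
            (hznZ m).1 (by linarith) (hznZ m).2.1 (hznZ m).2.2
          have := rTrans Rstar h hIndzmzs.2
          rw [show (F (seq m)) = ((F (seq m)).1, (F (seq m)).2) from (Prod.mk.eta).symm] at this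
          exact hm.2 this
        exact hRstarζ (hMaster (F Rstar) hzsZ _ hζZ (Or.inr hζblt) hcon)
      -- the β case forces seq m to be indifferent between F R' and F (seq m)
      have hseqind : ∀ m, bLt (F (seq m)) (F Rstar) → Indiff (seq m) (F R') (F (seq m)) := by
        intro m hblt2
        by_cases hα : Rstar.R (F (seq m)) (F R')
        · exact (hαFalse m hblt2 hα).elim
        have hstrictzs : ¬ Rstar.R (F (seq m)) (F Rstar) :=
          fun h => hα (rTrans Rstar h hRs1)
        obtain ⟨W2, hW2D, hW2I⟩ := hrich _ _ (hznZ m) hzsZ hblt2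
        have hPrecW2 : Prec W2 Rstar :=
          core_strict hDsc (hmem hRstarD).1 hW2D (hznZ m) hzsZ hblt2 hW2I hstrictzs
        have hW2low : W2.R (F R') (F (seq m)) :=
          hPrecW2 (F (seq m)) (hznZ m) (F R') hz'Z (Or.inr (hseqlt m).1) (hE1 m)
        have hseqW2 : PrecSim (seq m) W2 :=
          core hDsc (hmem (hseqDom m)).1 hW2D (hznZ m) hzsZ hblt2 hW2I
            (hSP (seq m) (hseqDom m) Rstar hRstarD)
        exact ⟨precSim_R hseqW2 (hznZ m) hz'Z (Or.inr (hseqlt m).1) hW2low,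
          hSP (seq m) (hseqDom m) R' hR'⟩
      -- two adjacent indices give a shared indifference pair : contradiction
      have hIm := hseqind N (hN N (le_refl N))
      have hIn := hseqind (N + 1) (hN (N + 1) (Nat.le_succ N))
      have hnm : bLt (F (seq (N + 1))) (F (seq N)) := (hseqlt N).2
      have hlow : (seq N).R (F R') (F (seq (N + 1))) :=
        rTrans (seq N) hIm.1 (hSP (seq N) (hseqDom N) (seq (N + 1)) (hseqDom (N + 1)))
      have hPrec2 : PrecSim (seq N) (seq (N + 1)) :=
        core hDsc (hmem (hseqDom N)).1 (hmem (hseqDom (N + 1))).1 hz'Z (hznZ (N + 1))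
          (hseqlt (N + 1)).1 hIn hlow
      have hne2 : seq N ≠ seq (N + 1) := by
        intro h
        have := congrArg F h
        rw [← this] at hnm
        exact lt_irrefl _ hnm.1
      rcases hPrec2 with heq2 | hp
      · exact hne2 heq2
      have h1 : (seq N).R (F (seq (N + 1))) (F (seq N)) :=
        hp (F (seq N)) (hznZ N) (F (seq (N + 1))) (hznZ (N + 1)) (Or.inr hnm)
          (hSP (seq (N + 1)) (hseqDom (N + 1)) (seq N) (hseqDom N))
      have hIzn : Indiff (seq N) (F R') (F (seq (N + 1))) :=
        ⟨hlow, rTrans (seq N) h1 hIm.2⟩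
      exact hne2 (sharedPair hDsc (hmem (hseqDom N)).1 (hmem (hseqDom (N + 1))).1 hz'Z
        (hznZ (N + 1)) (fun hh => lt_irrefl _ (hh ▸ (hseqlt (N + 1)).1.1)) hIzn hIn)
    · -- EASY case : F R* strictly below F R'
      have hPrecSim := hub R' hR' rfl
      rcases hPrecSim with heq | hprec
      · exact hne (congrArg F heq).symm
      have hR'ind1 : R'.R (F Rstar) (F R') :=
        hprec (F R') hz'Z (F Rstar) hzsZ (Or.inr hcase) hRs1
      have hRstarStrict : ¬ Rstar.R (F R') (F Rstar) := by
        intro h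
        have heq := sharedPair hDsc (hmem hR').1 (hmem hRstarD).1 hzsZ hz'Z
          (fun hh => lt_irrefl _ (hh ▸ hcase.1)) ⟨hR'ind1, hR'1⟩ ⟨hRs1, h⟩
        exact hne (congrArg F heq).symm
      have hq := Rstar.q_mono (F R').1 (F Rstar).2 (F R').2 hz'Z.1 hzsZ.2.1 hcase.2 hz'Z.2.2
      have hr : Rstar.R (F R') ((F R').1, (F Rstar).2) := by
        have := hq.1
        rwa [Prod.mk.eta] at this
      obtain ⟨tξ, h0, h1, hIξ⟩ := t_ivt Rstar hz'Z (le_of_lt hcase.1) hzsZ.1 hzsZ.2.1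
        (le_trans (le_of_lt hcase.2) hz'Z.2.2) (by rw [Prod.mk.eta]; exact hRs1) hr
      have hξne1 : tξ ≠ (F R').1 := by
        intro h
        rw [h] at hIξ
        have := hIξ.1
        rw [show (F R') = ((F R').1, (F R').2) from (Prod.mk.eta).symm] at this
        exact hq.2 this
      have hξne0 : tξ ≠ (F Rstar).1 := by
        intro h
        rw [h] at hIξ
        rw [Prod.mk.eta] at hIξ
        exact hRstarStrict hIξ.2
      have hξZ : inZ ((tξ, (F Rstar).2) : ℝ × ℝ) := inZ_mk (le_trans hzsZ.1 h0) hzsZ.2.1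
        (le_trans (le_of_lt hcase.2) hz'Z.2.2)
      have hR'strict : ¬ R'.R (tξ, (F Rstar).2) (F R') := by
        intro h
        have hm := R'.money_mono (F Rstar).1 tξ (F Rstar).2 hzsZ.1
          (lt_of_le_of_ne h0 (Ne.symm hξne0)) hzsZ.2.1
          (le_trans (le_of_lt hcase.2) hz'Z.2.2)
        have := rTrans R' h hR'1
        rw [show (F Rstar) = ((F Rstar).1, (F Rstar).2) from (Prod.mk.eta).symm] at this
        exact hm.2 this
      exact hR'strict (hprec (F R') hz'Z (tξ, (F Rstar).2) hξZ
        (Or.inr ⟨lt_of_le_of_ne h1 hξne1, hcase.2⟩) hIξ.1)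
  · -- PART 2 : infimum
    rintro Rss hRssD ⟨hlb, hglb⟩ ⟨seq, hseqDom, hseqlt, htend⟩
    by_contra hne
    have hzsZ : inZ (F Rss) := hFZ Rss hRssD
    have hznZ : ∀ n, inZ (F (seq n)) := fun n => hFZ _ (hseqDom n)
    have hRs1 : Rss.R (F Rss) (F R') := hSP Rss hRssD R' hR'
    have hR'1 : R'.R (F R') (F Rss) := hSP R' hR' Rss hRssD
    -- E1' : R** weakly prefers F R' to every F (seq n)
    have hE1 : ∀ n, Rss.R (F R') (F (seq n)) := by
      intro n
      have hblt : bLt (F (seq n)) (F R') := (hseqlt n).1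
      obtain ⟨B1, hB1D, hB1I⟩ := hrich _ _ (hznZ n) hz'Z hblt
      have hB1lb : ∀ X ∈ Dom, F X = F R' → PrecSim B1 X := by
        intro X hX hFX
        have hXhigh : X.R (F R') (F (seq n)) := by
          have := hSP X hX (seq n) (hseqDom n)
          rwa [hFX] at this
        exact core_hi hDsc (hmem hX).1 hB1D (hznZ n) hz'Z hblt hB1I hXhigh
      have hB1Rss : PrecSim B1 Rss := by
        by_cases hcase : Rlo.R (F (seq n)) (F R')
        · have hRloB1 : PrecSim Rlo B1 :=
            core hDsc hlo hB1D (hznZ n) hz'Z hblt hB1I hcase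
          have hB1Rhi : PrecSim B1 Rhi :=
            precSim_trans (hB1lb R' hR' rfl) (hmem hR').2.2
          have hB1Dom : B1 ∈ Dom := by rw [hDom]; exact ⟨hB1D, hRloB1, hB1Rhi⟩
          exact hglb B1 hB1Dom hB1lb
        · have hPrecB1Rlo : Prec B1 Rlo :=
            core_strict hDsc hlo hB1D (hznZ n) hz'Z hblt hB1I hcase
          exact precSim_trans (Or.inr hPrecB1Rlo) (hmem hRssD).2.1
      rcases hB1Rss with heq | hp
      · rw [← heq]
        exact hB1I.2
      apply limit_up Rss (hznZ n) hz'Z hblt.1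
      intro r hr1 hr2 hcon
      have hζZ : inZ (((F (seq n)).1 + r, (F (seq n)).2) : ℝ × ℝ) :=
        inZ_mk (by linarith [(hznZ n).1]) (hznZ n).2.1 (hznZ n).2.2
      have hζblt : bLt (((F (seq n)).1 + r, (F (seq n)).2) : ℝ × ℝ) (F R') :=
        ⟨by simp only; linarith [hblt.1], by simp only; exact hblt.2⟩
      have hB1ζ : ¬ B1.R ((F (seq n)).1 + r, (F (seq n)).2) (F R') := by
        intro h
        have hm := B1.money_mono (F (seq n)).1 ((F (seq n)).1 + r) (F (seq n)).2
          (hznZ n).1 (by linarith) (hznZ n).2.1 (hznZ n).2.2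
        have := rTrans B1 h hB1I.2
        rw [show (F (seq n)) = ((F (seq n)).1, (F (seq n)).2) from (Prod.mk.eta).symm] at this
        exact hm.2 this
      exact hB1ζ (hp (F R') hz'Z _ hζZ (Or.inr hζblt) hcon)
    rcases trichotomy Rss R' hzsZ hz'Z (fun h => hne h) hRs1 hR'1 with hcase | hmain
    · -- EASY case : F R' strictly below F R**
      have hPrecSim := hlb R' hR' rfl
      rcases hPrecSim with heq | hprec
      · exact hne (congrArg F heq)
      have hRssind1 : Rss.R (F R') (F Rss) :=
        hprec (F Rss) hzsZ (F R') hz'Z (Or.inr hcase) hR'1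
      have hR'Strict : ¬ R'.R (F Rss) (F R') := by
        intro h
        have heq := sharedPair hDsc (hmem hR').1 (hmem hRssD).1 hz'Z hzsZ
          (fun hh => lt_irrefl _ (hh ▸ hcase.1)) ⟨hR'1, h⟩ ⟨hRssind1, hRs1⟩
        exact hne (congrArg F heq).symm
      have hq := R'.q_mono (F Rss).1 (F R').2 (F Rss).2 hzsZ.1 hz'Z.2.1 hcase.2 hzsZ.2.2
      have hr : R'.R (F Rss) ((F Rss).1, (F R').2) := by
        have := hq.1
        rwa [Prod.mk.eta] at this
      obtain ⟨tξ, h0, h1, hIξ⟩ := t_ivt R' hzsZ (le_of_lt hcase.1) hz'Z.1 hz'Z.2.1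
        (le_trans (le_of_lt hcase.2) hzsZ.2.2) (by rw [Prod.mk.eta]; exact hR'1) hr
      have hξne1 : tξ ≠ (F Rss).1 := by
        intro h
        rw [h] at hIξ
        have := hIξ.1
        rw [show (F Rss) = ((F Rss).1, (F Rss).2) from (Prod.mk.eta).symm] at this
        exact hq.2 this
      have hξne0 : tξ ≠ (F R').1 := by
        intro h
        rw [h] at hIξ
        rw [Prod.mk.eta] at hIξ
        exact hR'Strict hIξ.2
      have hξZ : inZ ((tξ, (F R').2) : ℝ × ℝ) := inZ_mk (le_trans hz'Z.1 h0) hz'Z.2.1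
        (le_trans (le_of_lt hcase.2) hzsZ.2.2)
      have hRssStrict : ¬ Rss.R (tξ, (F R').2) (F Rss) := by
        intro h
        have hm := Rss.money_mono (F R').1 tξ (F R').2 hz'Z.1
          (lt_of_le_of_ne h0 (Ne.symm hξne0)) hz'Z.2.1
          (le_trans (le_of_lt hcase.2) hzsZ.2.2)
        have := rTrans Rss h hRs1
        rw [show (F R') = ((F R').1, (F R').2) from (Prod.mk.eta).symm] at this
        exact hm.2 this
      exact hRssStrict (hprec (F Rss) hzsZ (tξ, (F R').2) hξZ
        (Or.inr ⟨lt_of_le_of_ne h1 hξne1, hcase.2⟩) hIξ.1)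
    · -- MAIN case : F R** strictly below F R'
      have hRsszz : Rss.R (F R') (F Rss) := by
        obtain ⟨W, hWD, hWI⟩ := hrich _ _ hzsZ hz'Z hmain
        have hWlb : ∀ X ∈ Dom, F X = F R' → PrecSim W X := by
          intro X hX hFX
          have hXhigh : X.R (F R') (F Rss) := by
            have := hSP X hX Rss hRssD
            rwa [hFX] at this
          exact core_hi hDsc (hmem hX).1 hWD hzsZ hz'Z hmain hWI hXhigh
        have hWRss : PrecSim W Rss := by
          by_cases hcase2 : Rlo.R (F Rss) (F R')
          · have hRloW : PrecSim Rlo W := core hDsc hlo hWD hzsZ hz'Z hmain hWI hcase2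
            have hWRhi : PrecSim W Rhi := precSim_trans (hWlb R' hR' rfl) (hmem hR').2.2
            have hWDom : W ∈ Dom := by rw [hDom]; exact ⟨hWD, hRloW, hWRhi⟩
            exact hglb W hWDom hWlb
          · exact precSim_trans
              (Or.inr (core_strict hDsc hlo hWD hzsZ hz'Z hmain hWI hcase2))
              (hmem hRssD).2.1
        rcases hWRss with heq | hp
        · exact heq ▸ hWI.2
        apply limit_up Rss hzsZ hz'Z hmain.1
        intro r hr1 hr2 hcon
        have hζZ : inZ (((F Rss).1 + r, (F Rss).2) : ℝ × ℝ) :=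
          inZ_mk (by linarith [hzsZ.1]) hzsZ.2.1 hzsZ.2.2
        have hζblt : bLt (((F Rss).1 + r, (F Rss).2) : ℝ × ℝ) (F R') :=
          ⟨by simp only; linarith [hmain.1], by simp only; exact hmain.2⟩
        have hWζ : ¬ W.R ((F Rss).1 + r, (F Rss).2) (F R') := by
          intro h
          have hm := W.money_mono (F Rss).1 ((F Rss).1 + r) (F Rss).2 hzsZ.1
            (by linarith) hzsZ.2.1 hzsZ.2.2
          have := rTrans W h hWI.2
          rw [show (F Rss) = ((F Rss).1, (F Rss).2) from (Prod.mk.eta).symm] at this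
          exact hm.2 this
        exact hWζ (hp (F R') hz'Z _ hζZ (Or.inr hζblt) hcon)
      -- eventually F R** is strictly below F (seq n)
      obtain ⟨N, hN⟩ : ∃ N, ∀ n ≥ N, bLt (F Rss) (F (seq n)) := by
        have h1 : Filter.Tendsto (fun n => (F (seq n)).1) Filter.atTop (nhds (F R').1) :=
          (Continuous.tendsto continuous_fst _).comp htend
        have h2 : Filter.Tendsto (fun n => (F (seq n)).2) Filter.atTop (nhds (F R').2) :=
          (Continuous.tendsto continuous_snd _).comp htend
        have e1 := h1.eventually_const_lt hmain.1
        have e2 := h2.eventually_const_lt hmain.2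
        obtain ⟨N, hN⟩ := Filter.eventually_atTop.1 (e1.and e2)
        exact ⟨N, fun n hn => ⟨(hN n hn).1, (hN n hn).2⟩⟩
      have hblt1 : bLt (F (seq N)) (F R') := (hseqlt N).1
      have hblt2 : bLt (F Rss) (F (seq N)) := hN N (le_refl N)
      by_cases hα : Rss.R (F (seq N)) (F R')
      · -- α case
        have hmne : seq N ≠ Rss := by
          intro h
          have := congrArg F h
          rw [this] at hblt2
          exact lt_irrefl _ hblt2.1
        have hIndzzm : Indiff Rss (F R') (F (seq N)) := ⟨hE1 N, hα⟩
        have hIndssm : Indiff Rss (F Rss) (F (seq N)) :=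
          ⟨hSP Rss hRssD (seq N) (hseqDom N), rTrans Rss hα hRsszz⟩
        have hstrict1 : ¬ (seq N).R (F R') (F (seq N)) := by
          intro h
          exact hmne (sharedPair hDsc (hmem (hseqDom N)).1 (hmem hRssD).1 hz'Z (hznZ N)
            (fun hh => lt_irrefl _ (by rw [hh] at hblt1; exact hblt1.1))
            ⟨h, hSP (seq N) (hseqDom N) R' hR'⟩ hIndzzm)
        have hstrict2 : ¬ (seq N).R (F Rss) (F (seq N)) := by
          intro h
          exact hmne (sharedPair hDsc (hmem (hseqDom N)).1 (hmem hRssD).1 hzsZ (hznZ N)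
            (fun hh => lt_irrefl _ (hh ▸ hblt2.1))
            ⟨h, hSP (seq N) (hseqDom N) Rss hRssD⟩ hIndssm)
        have hMaster : Prec Rss (seq N) :=
          master (hDsc Rss (hmem hRssD).1 (seq N) (hmem (hseqDom N)).1 (Ne.symm hmne))
            hzsZ (hznZ N) hblt2 hIndssm.1 hstrict2
        apply hstrict1
        apply limit_up (seq N) (hznZ N) hz'Z hblt1.1
        intro r hr1 hr2 hcon
        have hζZ : inZ (((F (seq N)).1 + r, (F (seq N)).2) : ℝ × ℝ) :=
          inZ_mk (by linarith [(hznZ N).1]) (hznZ N).2.1 (hznZ N).2.2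
        have hζblt : bLt (((F (seq N)).1 + r, (F (seq N)).2) : ℝ × ℝ) (F R') :=
          ⟨by simp only; linarith [hblt1.1], by simp only; exact hblt1.2⟩
        have hRssζ : ¬ Rss.R ((F (seq N)).1 + r, (F (seq N)).2) (F R') := by
          intro h
          have hm := Rss.money_mono (F (seq N)).1 ((F (seq N)).1 + r) (F (seq N)).2
            (hznZ N).1 (by linarith) (hznZ N).2.1 (hznZ N).2.2
          have := rTrans Rss h hIndzzm.1
          rw [show (F (seq N)) = ((F (seq N)).1, (F (seq N)).2) from (Prod.mk.eta).symm] at this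
          exact hm.2 this
        exact hRssζ (hMaster (F R') hz'Z _ hζZ (Or.inr hζblt) hcon)
      · -- β case
        have hstrictzs : ¬ Rss.R (F (seq N)) (F Rss) :=
          fun h => hα (rTrans Rss h hRs1)
        obtain ⟨Wn, hWnD, hWnI⟩ := hrich _ _ hzsZ (hznZ N) hblt2
        have hRsslow : Rss.R (F Rss) (F (seq N)) := hSP Rss hRssD (seq N) (hseqDom N)
        have hRssWn : PrecSim Rss Wn :=
          core hDsc (hmem hRssD).1 hWnD hzsZ (hznZ N) hblt2 hWnI hRsslow
        have hPrecRssWn : Prec Rss Wn := by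
          rcases hRssWn with heq | hp
          · exact absurd (heq.symm ▸ hWnI.2) hstrictzs
          · exact hp
        have hWnstrict : ¬ Wn.R (F (seq N)) (F R') :=
          fun h => hα (hPrecRssWn (F R') hz'Z (F (seq N)) (hznZ N) (Or.inr hblt1) h)
        have hWnSeq : PrecSim Wn (seq N) :=
          core_hi hDsc (hmem (hseqDom N)).1 hWnD hzsZ (hznZ N) hblt2 hWnI
            (hSP (seq N) (hseqDom N) Rss hRssD)
        rcases hWnSeq with heq | hp2
        · exact hWnstrict (by rw [heq]; exact hSP (seq N) (hseqDom N) R' hR')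
        · exact hWnstrict (hp2 (F R') hz'Z (F (seq N)) (hznZ N) (Or.inr hblt1)
            (hSP (seq N) (hseqDom N) R' hR'))
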